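/- arXiv:2305.17572 — 7 statements merged into one kernel-verified Lean document; each statement's English description precedes it below -/
import Mathlib

section
/- Let f be a regulated function on (a,b). The following are equivalent: (1) f^- is strictly increasing on (a,b); (2) f^+ is strictly increasing on (a,b); (3) f^+(s) < f^-(t) for all a < s < t < b. -/
open Filter Topology Function Set MeasureTheory

/-- `x` lies in the interval `(a, b)` with extended-real endpoints. -/
def MemI (a b : EReal) (x : ℝ) : Prop := a < (x : EReal) ∧ (x : EReal) < b

/-- `f` is regulated on `(a, b)`: both one-sided limits exist (as real numbers)
at every point of `(a, b)`. -/
def RegulatedOn' (f : ℝ → ℝ) (a b : EReal) : Prop :=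
  ∀ x : ℝ, MemI a b x →
    (∃ L : ℝ, Tendsto f (𝓝[<] x) (𝓝 L)) ∧ ∃ R : ℝ, Tendsto f (𝓝[>] x) (𝓝 R)

/-- The symmetric `α`-derivative of `f` at `x` equals `A`:
`(D_α f)(x) = lim_{h↓0} (f⁻(x+h) - f⁺(x-h)) / (α⁻(x+h) - α⁺(x-h))`. -/
def HasDerivAlpha (f α : ℝ → ℝ) (x A : ℝ) : Prop :=
  Tendsto (fun h : ℝ =>
      (leftLim f (x + h) - rightLim f (x - h)) /
        (leftLim α (x + h) - rightLim α (x - h)))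
    (𝓝[>] (0 : ℝ)) (𝓝 A)

/-- The filter of real numbers approaching `b : EReal` from the left (`x ↑ b`). -/
noncomputable def leftFilter (b : EReal) : Filter ℝ := comap (fun x : ℝ => (x : EReal)) (𝓝[<] b)

/-- The filter of real numbers approaching `a : EReal` from the right (`x ↓ a`). -/
noncomputable def rightFilter (a : EReal) : Filter ℝ := comap (fun x : ℝ => (x : EReal)) (𝓝[>] a)

set_option linter.unusedVariables false in
lemma memI_between {a b : EReal} {x y u : ℝ} (hx : MemI a b x) (hy : MemI a b y)
    (h1 : x ≤ u) (h2 : u ≤ y) : MemI a b u :=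
  ⟨lt_of_lt_of_le hx.1 (by exact_mod_cast h1), lt_of_le_of_lt (by exact_mod_cast h2) hy.2⟩

lemma exists_right {a b : EReal} {x : ℝ} (hx : MemI a b x) :
    ∃ d : ℝ, x < d ∧ MemI a b d := by
  obtain ⟨d, hd1, hd2⟩ := EReal.exists_between_coe_real hx.2
  exact ⟨d, by exact_mod_cast hd1, lt_trans hx.1 hd1, hd2⟩

lemma exists_left {a b : EReal} {x : ℝ} (hx : MemI a b x) :
    ∃ c : ℝ, c < x ∧ MemI a b c := by
  obtain ⟨c, hc1, hc2⟩ := EReal.exists_between_coe_real hx.1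
  exact ⟨c, by exact_mod_cast hc2, hc1, lt_trans hc2 hx.2⟩

lemma tendsto_leftLim_right {a b : EReal} {f : ℝ → ℝ} (hf : RegulatedOn' f a b)
    {x : ℝ} (hx : MemI a b x) :
    Tendsto (leftLim f) (𝓝[>] x) (𝓝 (rightLim f x)) := by
  obtain ⟨R, hR⟩ := (hf x hx).2
  rw [rightLim_eq_of_tendsto (h := nhdsGT_neBot _) hR]
  rw [Metric.tendsto_nhdsWithin_nhds] at hR ⊢
  intro ε hε
  obtain ⟨δ₁, hδ₁, hδ⟩ := hR (ε/2) (by linarith)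
  obtain ⟨d, hxd, hd⟩ := exists_right hx
  refine ⟨min δ₁ (d - x), by simp [hδ₁, hxd], ?_⟩
  intro u hu hud
  have hu' : x < u := hu
  have hud1 : |u - x| < δ₁ := by
    rw [Real.dist_eq] at hud; exact lt_of_lt_of_le hud (min_le_left _ _)
  have hud2 : u < d := by
    rw [Real.dist_eq] at hud
    have := lt_of_lt_of_le hud (min_le_right _ _)
    rw [abs_of_pos (by linarith)] at this; linarith
  have huI : MemI a b u := memI_between hx hd hu'.le hud2.le
  obtain ⟨L, hL⟩ := (hf u huI).1
  rw [leftLim_eq_of_tendsto (h := nhdsLT_neBot _) hL]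
  have hev : ∀ᶠ v in 𝓝[<] u, dist (f v) R ≤ ε / 2 := by
    filter_upwards [Ioo_mem_nhdsLT_of_mem ⟨hu', le_refl u⟩] with v hv
    refine le_of_lt (hδ hv.1 ?_)
    rw [Real.dist_eq, abs_of_pos (by linarith [hv.1])]
    rw [abs_of_pos (by linarith)] at hud1
    linarith [hv.2]
  have : Tendsto (fun v => dist (f v) R) (𝓝[<] u) (𝓝 (dist L R)) :=
    (hL.dist tendsto_const_nhds)
  have := le_of_tendsto this hev
  calc dist L R ≤ ε / 2 := this
    _ < ε := by linarith

lemma tendsto_rightLim_left {a b : EReal} {f : ℝ → ℝ} (hf : RegulatedOn' f a b)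
    {x : ℝ} (hx : MemI a b x) :
    Tendsto (rightLim f) (𝓝[<] x) (𝓝 (leftLim f x)) := by
  obtain ⟨L, hL⟩ := (hf x hx).1
  rw [leftLim_eq_of_tendsto (h := nhdsLT_neBot _) hL]
  rw [Metric.tendsto_nhdsWithin_nhds] at hL ⊢
  intro ε hε
  obtain ⟨δ₁, hδ₁, hδ⟩ := hL (ε/2) (by linarith)
  obtain ⟨c, hcx, hc⟩ := exists_left hx
  refine ⟨min δ₁ (x - c), by simp [hδ₁, hcx], ?_⟩
  intro u hu hud
  have hu' : u < x := hu
  have hud1 : |u - x| < δ₁ := by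
    rw [Real.dist_eq] at hud; exact lt_of_lt_of_le hud (min_le_left _ _)
  have hud2 : c < u := by
    rw [Real.dist_eq] at hud
    have := lt_of_lt_of_le hud (min_le_right _ _)
    rw [abs_of_neg (by linarith)] at this; linarith
  have huI : MemI a b u := memI_between hc hx hud2.le hu'.le
  obtain ⟨R, hR⟩ := (hf u huI).2
  rw [rightLim_eq_of_tendsto (h := nhdsGT_neBot _) hR]
  have hev : ∀ᶠ v in 𝓝[>] u, dist (f v) L ≤ ε / 2 := by
    filter_upwards [Ioo_mem_nhdsGT_of_mem ⟨le_refl u, hu'⟩] with v hv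
    refine le_of_lt (hδ hv.2 ?_)
    rw [Real.dist_eq, abs_of_neg (by linarith [hv.2])]
    rw [abs_of_neg (by linarith)] at hud1
    linarith [hv.1]
  have : Tendsto (fun v => dist (f v) L) (𝓝[>] u) (𝓝 (dist R L)) :=
    (hR.dist tendsto_const_nhds)
  have := le_of_tendsto this hev
  calc dist R L ≤ ε / 2 := this
    _ < ε := by linarith

lemma left_le_right_of_p3 {a b : EReal} {f : ℝ → ℝ} (hf : RegulatedOn' f a b)
    (h3 : ∀ s t : ℝ, MemI a b s → MemI a b t → s < t → rightLim f s < leftLim f t)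
    {m : ℝ} (hm : MemI a b m) : leftLim f m ≤ rightLim f m := by
  have step1 : ∀ w : ℝ, MemI a b w → w < m → rightLim f w ≤ rightLim f m := by
    intro w hw hwm
    obtain ⟨d, hmd, hd⟩ := exists_right hm
    refine ge_of_tendsto (tendsto_leftLim_right hf hm) ?_
    filter_upwards [Ioo_mem_nhdsGT_of_mem ⟨le_refl m, hmd⟩] with u hu
    exact (h3 w u hw (memI_between hm hd hu.1.le hu.2.le) (lt_trans hwm hu.1)).le
  obtain ⟨c, hcm, hc⟩ := exists_left hm
  refine le_of_tendsto (tendsto_rightLim_left hf hm) ?_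
  filter_upwards [Ioo_mem_nhdsLT_of_mem ⟨hcm, le_refl m⟩] with w hw
  exact step1 w (memI_between hc hm hw.1.le hw.2.le) hw.2

lemma iff_left {a b : EReal} {f : ℝ → ℝ} (hf : RegulatedOn' f a b) :
    StrictMonoOn (leftLim f) {x : ℝ | MemI a b x} ↔
      ∀ s t : ℝ, MemI a b s → MemI a b t → s < t → rightLim f s < leftLim f t := by
  constructor
  · intro hmono s t hs ht hst
    set m := (s + t) / 2 with hm_def
    have hsm : s < m := by simp only [hm_def]; linarith
    have hmt : m < t := by simp only [hm_def]; linarith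
    have hm : MemI a b m := memI_between hs ht hsm.le hmt.le
    have h1 : rightLim f s ≤ leftLim f m := by
      refine le_of_tendsto (tendsto_leftLim_right hf hs) ?_
      filter_upwards [Ioo_mem_nhdsGT_of_mem ⟨le_refl s, hsm⟩] with u hu
      exact (hmono (memI_between hs hm hu.1.le hu.2.le) hm hu.2).le
    exact lt_of_le_of_lt h1 (hmono hm ht hmt)
  · intro h3 s hs t ht hst
    calc leftLim f s ≤ rightLim f s := left_le_right_of_p3 hf h3 hs
      _ < leftLim f t := h3 s t hs ht hst

lemma iff_right {a b : EReal} {f : ℝ → ℝ} (hf : RegulatedOn' f a b) :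
    StrictMonoOn (rightLim f) {x : ℝ | MemI a b x} ↔
      ∀ s t : ℝ, MemI a b s → MemI a b t → s < t → rightLim f s < leftLim f t := by
  constructor
  · intro hmono s t hs ht hst
    set m := (s + t) / 2 with hm_def
    have hsm : s < m := by simp only [hm_def]; linarith
    have hmt : m < t := by simp only [hm_def]; linarith
    have hm : MemI a b m := memI_between hs ht hsm.le hmt.le
    have h1 : rightLim f m ≤ leftLim f t := by
      refine ge_of_tendsto (tendsto_rightLim_left hf ht) ?_
      filter_upwards [Ioo_mem_nhdsLT_of_mem ⟨hmt, le_refl t⟩] with u hu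
      exact (hmono hm (memI_between hm ht hu.1.le hu.2.le) hu.1).le
    exact lt_of_lt_of_le (hmono hs hm hsm) h1
  · intro h3 s hs t ht hst
    calc rightLim f s < leftLim f t := h3 s t hs ht hst
      _ ≤ rightLim f t := left_le_right_of_p3 hf h3 ht

/-- For a regulated `f` on `(a,b)`, the following are equivalent:
`f⁻` strictly increasing, `f⁺` strictly increasing, and
`f⁺(s) < f⁻(t)` for all `a < s < t < b`. -/
theorem stmt1 (a b : EReal) (hab : a < b) (f : ℝ → ℝ)
    (hf : RegulatedOn' f a b) :
    (StrictMonoOn (leftLim f) {x : ℝ | MemI a b x} ↔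
      StrictMonoOn (rightLim f) {x : ℝ | MemI a b x}) ∧
    (StrictMonoOn (leftLim f) {x : ℝ | MemI a b x} ↔
      ∀ s t : ℝ, MemI a b s → MemI a b t → s < t → rightLim f s < leftLim f t) := by
  exact ⟨(iff_left hf).trans (iff_right hf).symm, iff_left hf⟩
end

section
/- Let f be regulated on (a,b) and α strictly increasing on (a,b). If the symmetric α-derivative (D_α f)(x) = lim_{h↓0} (f^-(x+h) - f^+(x-h))/(α^-(x+h) - α^+(x-h)) exists, then it equals lim_{h↓0} (f^+(x+h) - f^-(x-h))/(α^+(x+h) - α^-(x-h)). -/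
open Filter Topology Function Set MeasureTheory

/-- If `f` tends to `R` from the right at `p`, and `f` has left limits on `(p,q)`,
then `leftLim f` tends to `R` from the right at `p`. -/
lemma aux_left (f : ℝ → ℝ) (p q R : ℝ) (hpq : p < q)
    (hl : ∀ y ∈ Ioo p q, Tendsto f (𝓝[<] y) (𝓝 (leftLim f y)))
    (hR : Tendsto f (𝓝[>] p) (𝓝 R)) :
    Tendsto (fun y => leftLim f y) (𝓝[>] p) (𝓝 R) := by
  rw [Metric.tendsto_nhdsWithin_nhds] at hR ⊢
  intro ε hε
  obtain ⟨δ, hδ, hδ'⟩ := hR (ε/2) (by positivity)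
  refine ⟨min δ (q - p), by simp [hδ, hpq], ?_⟩
  intro y hy hyd
  have hy1 : p < y := hy
  have hyδ : y - p < δ := by
    have := lt_of_lt_of_le hyd (min_le_left _ _)
    rwa [Real.dist_eq, abs_of_pos (by linarith)] at this
  have hyq : y < q := by
    have := lt_of_lt_of_le hyd (min_le_right _ _)
    rw [Real.dist_eq, abs_of_pos (by linarith)] at this
    linarith
  have key : dist (leftLim f y) R ≤ ε/2 := by
    refine le_of_tendsto ((hl y ⟨hy1, hyq⟩).dist tendsto_const_nhds) ?_
    filter_upwards [Ioo_mem_nhdsLT hy1] with z hz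
    refine le_of_lt (hδ' (hz.1 : p < z) ?_)
    rw [Real.dist_eq, abs_of_pos (by linarith [hz.1])]
    linarith [hz.2]
  linarith [key, hε]

/-- Mirror image of `aux_left`. -/
lemma aux_right (f : ℝ → ℝ) (p q L : ℝ) (hqp : q < p)
    (hr : ∀ y ∈ Ioo q p, Tendsto f (𝓝[>] y) (𝓝 (rightLim f y)))
    (hL : Tendsto f (𝓝[<] p) (𝓝 L)) :
    Tendsto (fun y => rightLim f y) (𝓝[<] p) (𝓝 L) := by
  rw [Metric.tendsto_nhdsWithin_nhds] at hL ⊢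
  intro ε hε
  obtain ⟨δ, hδ, hδ'⟩ := hL (ε/2) (by positivity)
  refine ⟨min δ (p - q), by simp [hδ, hqp], ?_⟩
  intro y hy hyd
  have hy1 : y < p := hy
  have hyδ : p - y < δ := by
    have := lt_of_lt_of_le hyd (min_le_left _ _)
    rwa [Real.dist_eq, abs_of_neg (by linarith), neg_sub] at this
  have hyq : q < y := by
    have := lt_of_lt_of_le hyd (min_le_right _ _)
    rw [Real.dist_eq, abs_of_neg (by linarith), neg_sub] at this
    linarith
  have key : dist (rightLim f y) L ≤ ε/2 := by
    refine le_of_tendsto ((hr y ⟨hyq, hy1⟩).dist tendsto_const_nhds) ?_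
    filter_upwards [Ioo_mem_nhdsGT hy1] with z hz
    refine le_of_lt (hδ' (hz.2 : z < p) ?_)
    rw [Real.dist_eq, abs_of_neg (by linarith [hz.2]), neg_sub]
    linarith [hz.1]
  linarith [key, hε]

/-- The symmetric `α`-derivative can equivalently be computed with the roles of
the one-sided limits exchanged. -/
theorem stmt3 (a b : EReal) (hab : a < b) (f α : ℝ → ℝ)
    (hf : RegulatedOn' f a b) (hα : StrictMonoOn α {x : ℝ | MemI a b x})
    (x A : ℝ) (hx : MemI a b x) (hD : HasDerivAlpha f α x A) :
    Tendsto (fun h : ℝ =>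
        (rightLim f (x + h) - leftLim f (x - h)) /
          (rightLim α (x + h) - leftLim α (x - h)))
      (𝓝[>] (0 : ℝ)) (𝓝 A) := by
  -- pick real numbers a' < x < b' inside (a,b)
  obtain ⟨b', hxb', hb'b⟩ := EReal.exists_between_coe_real hx.2
  obtain ⟨a', haa', ha'x⟩ := EReal.exists_between_coe_real hx.1
  rw [EReal.coe_lt_coe_iff] at hxb' ha'x
  have hmem : ∀ y ∈ Ioo a' b', MemI a b y := fun y hy =>
    ⟨lt_trans haa' (EReal.coe_lt_coe_iff.2 hy.1),
     lt_trans (EReal.coe_lt_coe_iff.2 hy.2) hb'b⟩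
  -- one-sided limits of f
  have fL : ∀ y ∈ Ioo a' b', Tendsto f (𝓝[<] y) (𝓝 (leftLim f y)) := by
    intro y hy
    obtain ⟨⟨L, hL⟩, -⟩ := hf y (hmem y hy)
    rwa [leftLim_eq_of_tendsto hL]
  have fR : ∀ y ∈ Ioo a' b', Tendsto f (𝓝[>] y) (𝓝 (rightLim f y)) := by
    intro y hy
    obtain ⟨-, ⟨R, hR⟩⟩ := hf y (hmem y hy)
    rwa [rightLim_eq_of_tendsto hR]
  -- one-sided limits of α
  have αL : ∀ y ∈ Ioo a' b', Tendsto α (𝓝[<] y) (𝓝 (leftLim α y)) := by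
    intro y hy
    have Mf : MonotoneOn α (Ioo a' y) := by
      intro u hu v hv huv
      rcases eq_or_lt_of_le huv with rfl | huv
      · exact le_refl _
      · exact (hα (hmem u ⟨hu.1, hu.2.trans hy.2⟩) (hmem v ⟨hv.1, hv.2.trans hy.2⟩) huv).le
    have hbdd : BddAbove (α '' Ioo a' y) := by
      refine ⟨α y, ?_⟩
      rintro - ⟨z, hz, rfl⟩
      exact (hα (hmem z ⟨hz.1, hz.2.trans hy.2⟩) (hmem y hy) hz.2).le
    have t := MonotoneOn.tendsto_nhdsWithin_Ioo_left (nonempty_Ioo.2 hy.1) Mf hbdd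
    rwa [leftLim_eq_of_tendsto t]
  have αR : ∀ y ∈ Ioo a' b', Tendsto α (𝓝[>] y) (𝓝 (rightLim α y)) := by
    intro y hy
    have Mf : MonotoneOn α (Ioo y b') := by
      intro u hu v hv huv
      rcases eq_or_lt_of_le huv with rfl | huv
      · exact le_refl _
      · exact (hα (hmem u ⟨hy.1.trans hu.1, hu.2⟩) (hmem v ⟨hy.1.trans hv.1, hv.2⟩) huv).le
    have hbdd : BddBelow (α '' Ioo y b') := by
      refine ⟨α y, ?_⟩
      rintro - ⟨z, hz, rfl⟩
      exact (hα (hmem y hy) (hmem z ⟨hy.1.trans hz.1, hz.2⟩) hz.1).le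
    have t := MonotoneOn.tendsto_nhdsWithin_Ioo_right (nonempty_Ioo.2 hy.2) Mf hbdd
    rwa [rightLim_eq_of_tendsto t]
  -- translation maps between one-sided filters
  have comp_add : ∀ t : ℝ, Tendsto (fun h' : ℝ => x + h') (𝓝[>] t) (𝓝[>] (x + t)) := by
    intro t
    apply tendsto_nhdsWithin_of_tendsto_nhds_of_eventually_within
    · exact ((continuous_const.add continuous_id).tendsto t).mono_left nhdsWithin_le_nhds
    · filter_upwards [self_mem_nhdsWithin] with z hz
      exact add_lt_add_right (mem_Ioi.mp hz) x
  have comp_sub : ∀ t : ℝ, Tendsto (fun h' : ℝ => x - h') (𝓝[>] t) (𝓝[<] (x - t)) := by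
    intro t
    apply tendsto_nhdsWithin_of_tendsto_nhds_of_eventually_within
    · exact ((continuous_const.sub continuous_id).tendsto t).mono_left nhdsWithin_le_nhds
    · filter_upwards [self_mem_nhdsWithin] with z hz
      have : t < z := hz
      simp only [mem_Iio]
      linarith
  -- main ε-δ argument
  have hD' : Tendsto (fun h : ℝ =>
      (leftLim f (x + h) - rightLim f (x - h)) /
        (leftLim α (x + h) - rightLim α (x - h)))
      (𝓝[>] (0 : ℝ)) (𝓝 A) := hD
  rw [Metric.tendsto_nhdsWithin_nhds] at hD' ⊢
  intro ε hε
  obtain ⟨δ₁, hδ₁, hg⟩ := hD' (ε/2) (by positivity)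
  refine ⟨min δ₁ (min (b' - x) (x - a')),
    lt_min hδ₁ (lt_min (by linarith) (by linarith)), ?_⟩
  intro h hh hhd
  have h0 : (0 : ℝ) < h := hh
  have hd : h < min δ₁ (min (b' - x) (x - a')) := by
    rwa [Real.dist_eq, sub_zero, abs_of_pos h0] at hhd
  have hdδ₁ : h < δ₁ := lt_of_lt_of_le hd (min_le_left _ _)
  have hdb : h < b' - x := lt_of_lt_of_le hd ((min_le_right _ _).trans (min_le_left _ _))
  have hda : h < x - a' := lt_of_lt_of_le hd ((min_le_right _ _).trans (min_le_right _ _))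
  have hxh1 : x + h ∈ Ioo a' b' := ⟨by linarith, by linarith⟩
  have hxh2 : x - h ∈ Ioo a' b' := ⟨by linarith, by linarith⟩
  -- the four convergences as h' ↓ h
  have T1 : Tendsto (fun h' : ℝ => leftLim f (x + h')) (𝓝[>] h)
      (𝓝 (rightLim f (x + h))) := by
    refine (aux_left f (x + h) b' _ hxh1.2 (fun y hy => fL y ⟨hxh1.1.trans hy.1, hy.2⟩)
      (fR (x + h) hxh1)).comp (comp_add h)
  have T2 : Tendsto (fun h' : ℝ => rightLim f (x - h')) (𝓝[>] h)
      (𝓝 (leftLim f (x - h))) := by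
    refine (aux_right f (x - h) a' _ hxh2.1 (fun y hy => fR y ⟨hy.1, hy.2.trans hxh2.2⟩)
      (fL (x - h) hxh2)).comp (comp_sub h)
  have T3 : Tendsto (fun h' : ℝ => leftLim α (x + h')) (𝓝[>] h)
      (𝓝 (rightLim α (x + h))) := by
    refine (aux_left α (x + h) b' _ hxh1.2 (fun y hy => αL y ⟨hxh1.1.trans hy.1, hy.2⟩)
      (αR (x + h) hxh1)).comp (comp_add h)
  have T4 : Tendsto (fun h' : ℝ => rightLim α (x - h')) (𝓝[>] h)
      (𝓝 (leftLim α (x - h))) := by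
    refine (aux_right α (x - h) a' _ hxh2.1 (fun y hy => αR y ⟨hy.1, hy.2.trans hxh2.2⟩)
      (αL (x - h) hxh2)).comp (comp_sub h)
  -- the denominator at the limit is positive
  have hpos : 0 < rightLim α (x + h) - leftLim α (x - h) := by
    have h1 : leftLim α (x - h) ≤ α (x - h) := by
      refine le_of_tendsto (αL (x - h) hxh2) ?_
      filter_upwards [Ioo_mem_nhdsLT hxh2.1] with z hz
      exact (hα (hmem z ⟨hz.1, hz.2.trans hxh2.2⟩) (hmem _ hxh2) hz.2).le
    have h2 : α (x + h) ≤ rightLim α (x + h) := by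
      refine ge_of_tendsto (αR (x + h) hxh1) ?_
      filter_upwards [Ioo_mem_nhdsGT hxh1.2] with z hz
      exact (hα (hmem _ hxh1) (hmem z ⟨hxh1.1.trans hz.1, hz.2⟩) hz.1).le
    have h3 : α (x - h) < α (x + h) := hα (hmem _ hxh2) (hmem _ hxh1) (by linarith)
    linarith
  -- the original quotient tends to the exchanged quotient as h' ↓ h
  have Tg : Tendsto (fun h' : ℝ =>
      (leftLim f (x + h') - rightLim f (x - h')) /
        (leftLim α (x + h') - rightLim α (x - h'))) (𝓝[>] h)
      (𝓝 ((rightLim f (x + h) - leftLim f (x - h)) /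
        (rightLim α (x + h) - leftLim α (x - h)))) :=
    (T1.sub T2).div (T3.sub T4) (ne_of_gt hpos)
  have final : dist ((rightLim f (x + h) - leftLim f (x - h)) /
      (rightLim α (x + h) - leftLim α (x - h))) A ≤ ε/2 := by
    refine le_of_tendsto (Tg.dist tendsto_const_nhds) ?_
    filter_upwards [Ioo_mem_nhdsGT hd] with z hz
    refine (hg (show (0:ℝ) < z from h0.trans hz.1) ?_).le
    rw [Real.dist_eq, sub_zero, abs_of_pos (h0.trans hz.1)]
    exact hz.2.trans_le (min_le_left _ _)
  calc dist _ A ≤ ε/2 := final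
    _ < ε := by linarith
end

section
/- Let α be strictly increasing on (a,b) and f regulated on (a,b). If at some point x ∈ (a,b) the derivative (D_α f)(x) exists and α^-(x) = α^+(x), then f^-(x) = f^+(x). -/
open Filter Topology Function Set MeasureTheory

lemma aux_left_s4 (g : ℝ → ℝ) (x R : ℝ) (hg : Tendsto g (𝓝[>] x) (𝓝 R))
    (hL : ∀ᶠ h in 𝓝[>] (0:ℝ), Tendsto g (𝓝[<] (x+h)) (𝓝 (leftLim g (x+h)))) :
    Tendsto (fun h : ℝ => leftLim g (x+h)) (𝓝[>] (0:ℝ)) (𝓝 R) := by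
  rw [Metric.tendsto_nhdsWithin_nhds] at hg
  rw [Metric.tendsto_nhdsWithin_nhds]
  intro ε hε
  obtain ⟨δ, hδ, hδ'⟩ := hg (ε/2) (by positivity)
  obtain ⟨u, hu, huS⟩ := mem_nhdsGT_iff_exists_Ioo_subset.1 hL
  refine ⟨min δ (u - 0), by simp only [sub_zero]; exact lt_min hδ hu, ?_⟩
  intro h hh hdist
  have hh0 : 0 < h := hh
  have hhu : h < u := by
    have := lt_of_lt_of_le hdist (min_le_right _ _)
    simp [abs_of_pos hh0, Real.dist_eq] at this ⊢; linarith
  have hhδ : h < δ := by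
    have := lt_of_lt_of_le hdist (min_le_left _ _)
    simp [abs_of_pos hh0, Real.dist_eq] at this ⊢; linarith
  have htd : Tendsto g (𝓝[<] (x+h)) (𝓝 (leftLim g (x+h))) := huS ⟨hh0, hhu⟩
  have hev : ∀ᶠ y in 𝓝[<] (x+h), dist (g y) R ≤ ε/2 := by
    filter_upwards [Ioo_mem_nhdsLT_of_mem (show x + h ∈ Ioc x (x+h) by
      exact ⟨by linarith, le_refl _⟩)] with y hy
    exact le_of_lt (hδ' hy.1 (by rw [Real.dist_eq, abs_of_pos (by linarith [hy.1] : (0:ℝ) < y - x)]; linarith [hy.2]))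
  have : dist (leftLim g (x+h)) R ≤ ε/2 :=
    le_of_tendsto (htd.dist tendsto_const_nhds) hev
  linarith
lemma aux_right_s4 (g : ℝ → ℝ) (x L : ℝ) (hg : Tendsto g (𝓝[<] x) (𝓝 L))
    (hL : ∀ᶠ h in 𝓝[>] (0:ℝ), Tendsto g (𝓝[>] (x-h)) (𝓝 (rightLim g (x-h)))) :
    Tendsto (fun h : ℝ => rightLim g (x-h)) (𝓝[>] (0:ℝ)) (𝓝 L) := by
  rw [Metric.tendsto_nhdsWithin_nhds] at hg
  rw [Metric.tendsto_nhdsWithin_nhds]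
  intro ε hε
  obtain ⟨δ, hδ, hδ'⟩ := hg (ε/2) (by positivity)
  obtain ⟨u, hu, huS⟩ := mem_nhdsGT_iff_exists_Ioo_subset.1 hL
  refine ⟨min δ (u - 0), by simp only [sub_zero]; exact lt_min hδ hu, ?_⟩
  intro h hh hdist
  have hh0 : 0 < h := hh
  have hhu : h < u := by
    have := lt_of_lt_of_le hdist (min_le_right _ _)
    simp [abs_of_pos hh0, Real.dist_eq] at this ⊢; linarith
  have hhδ : h < δ := by
    have := lt_of_lt_of_le hdist (min_le_left _ _)
    simp [abs_of_pos hh0, Real.dist_eq] at this ⊢; linarith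
  have htd : Tendsto g (𝓝[>] (x-h)) (𝓝 (rightLim g (x-h))) := huS ⟨hh0, hhu⟩
  have hev : ∀ᶠ y in 𝓝[>] (x-h), dist (g y) L ≤ ε/2 := by
    filter_upwards [Ioo_mem_nhdsGT_of_mem (show x - h ∈ Ico (x-h) x by
      exact ⟨le_refl _, by linarith⟩)] with y hy
    exact le_of_lt (hδ' hy.2 (by rw [Real.dist_eq, abs_of_neg (by linarith [hy.2] : y - x < 0)]; linarith [hy.1]))
  have : dist (rightLim g (x-h)) L ≤ ε/2 :=
    le_of_tendsto (htd.dist tendsto_const_nhds) hev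
  linarith

/-- If `(D_α f)(x)` exists and `α⁻(x) = α⁺(x)`, then `f⁻(x) = f⁺(x)`. -/
theorem stmt4 (a b : EReal) (hab : a < b) (f α : ℝ → ℝ)
    (hf : RegulatedOn' f a b) (hα : StrictMonoOn α {x : ℝ | MemI a b x})
    (x A : ℝ) (hx : MemI a b x) (hD : HasDerivAlpha f α x A)
    (hcont : leftLim α x = rightLim α x) :
    leftLim f x = rightLim f x := by
  obtain ⟨u, hau, hux⟩ := EReal.lt_iff_exists_real_btwn.1 hx.1
  obtain ⟨v, hxv, hvb⟩ := EReal.lt_iff_exists_real_btwn.1 hx.2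
  have hux' : u < x := by exact_mod_cast hux
  have hxv' : x < v := by exact_mod_cast hxv
  have hS : Ioo u v ⊆ {y : ℝ | MemI a b y} := by
    intro y hy
    exact ⟨lt_trans hau (by exact_mod_cast hy.1), lt_trans (by exact_mod_cast hy.2) hvb⟩
  have hxS : x ∈ Ioo u v := ⟨hux', hxv'⟩
  have Mα : MonotoneOn α (Ioo u v) := (hα.mono hS).monotoneOn
  -- one-sided limits of f at x
  obtain ⟨⟨L, hfL⟩, ⟨R, hfR⟩⟩ := hf x hx
  have hLL : leftLim f x = L := leftLim_eq_of_tendsto hfL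
  have hRR : rightLim f x = R := rightLim_eq_of_tendsto hfR
  -- small h's
  have hsmall : Ioo (0:ℝ) (min (v - x) (x - u)) ∈ 𝓝[>] (0:ℝ) :=
    Ioo_mem_nhdsGT_of_mem ⟨le_refl _, lt_min (by linarith) (by linarith)⟩
  -- f left limits at x+h exist
  have hfL' : ∀ᶠ h in 𝓝[>] (0:ℝ), Tendsto f (𝓝[<] (x+h)) (𝓝 (leftLim f (x+h))) := by
    filter_upwards [hsmall] with h hh
    obtain ⟨hh1, hh2⟩ := hh
    obtain ⟨⟨L', hL'⟩, -⟩ := hf (x+h) (hS ⟨by linarith, by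
      have := lt_of_lt_of_le hh2 (min_le_left _ _); linarith⟩)
    rwa [leftLim_eq_of_tendsto hL']
  have hfR' : ∀ᶠ h in 𝓝[>] (0:ℝ), Tendsto f (𝓝[>] (x-h)) (𝓝 (rightLim f (x-h))) := by
    filter_upwards [hsmall] with h hh
    obtain ⟨hh1, hh2⟩ := hh
    obtain ⟨-, ⟨R', hR'⟩⟩ := hf (x-h) (hS ⟨by
      have := lt_of_lt_of_le hh2 (min_le_right _ _); linarith, by linarith⟩)
    rwa [rightLim_eq_of_tendsto hR']
  -- α one-sided limits at x
  have hαR : Tendsto α (𝓝[>] x) (𝓝 (sInf (α '' Ioo x v))) := by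
    refine MonotoneOn.tendsto_nhdsWithin_Ioo_right ⟨(x+v)/2, by constructor <;> linarith⟩
      (Mα.mono (fun y hy => ⟨lt_trans hux' hy.1, hy.2⟩)) ⟨α ((u+x)/2), ?_⟩
    rintro w ⟨y, hy, rfl⟩
    exact Mα ⟨by linarith, by linarith⟩ ⟨lt_trans hux' hy.1, hy.2⟩ (by linarith [hy.1])
  have hαL : Tendsto α (𝓝[<] x) (𝓝 (sSup (α '' Ioo u x))) := by
    refine MonotoneOn.tendsto_nhdsWithin_Ioo_left ⟨(u+x)/2, by constructor <;> linarith⟩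
      (Mα.mono (fun y hy => ⟨hy.1, lt_trans hy.2 hxv'⟩)) ⟨α ((x+v)/2), ?_⟩
    rintro w ⟨y, hy, rfl⟩
    exact Mα ⟨hy.1, lt_trans hy.2 hxv'⟩ ⟨by linarith, by linarith⟩ (by linarith [hy.2])
  have hαRx : rightLim α x = sInf (α '' Ioo x v) :=
    rightLim_eq_of_tendsto hαR
  have hαLx : leftLim α x = sSup (α '' Ioo u x) :=
    leftLim_eq_of_tendsto hαL
  -- α left limits at x+h exist, right limits at x-h exist
  have hαL' : ∀ h, h ∈ Ioo (0:ℝ) (min (v - x) (x - u)) →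
      Tendsto α (𝓝[<] (x+h)) (𝓝 (leftLim α (x+h))) := by
    intro h hh
    obtain ⟨hh1, hh2⟩ := hh
    have hv : x + h < v := by have := lt_of_lt_of_le hh2 (min_le_left _ _); linarith
    have htd : Tendsto α (𝓝[<] (x+h)) (𝓝 (sSup (α '' Ioo u (x+h)))) := by
      refine MonotoneOn.tendsto_nhdsWithin_Ioo_left ⟨x, ⟨hux', by linarith⟩⟩
        (Mα.mono (fun y hy => ⟨hy.1, lt_trans hy.2 hv⟩)) ⟨α ((x+h+v)/2), ?_⟩
      rintro w ⟨y, hy, rfl⟩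
      exact Mα ⟨hy.1, lt_trans hy.2 hv⟩ ⟨by linarith [hy.1], by linarith⟩ (by linarith [hy.2])
    rwa [leftLim_eq_of_tendsto htd]
  have hαR' : ∀ h, h ∈ Ioo (0:ℝ) (min (v - x) (x - u)) →
      Tendsto α (𝓝[>] (x-h)) (𝓝 (rightLim α (x-h))) := by
    intro h hh
    obtain ⟨hh1, hh2⟩ := hh
    have hu2 : u < x - h := by have := lt_of_lt_of_le hh2 (min_le_right _ _); linarith
    have htd : Tendsto α (𝓝[>] (x-h)) (𝓝 (sInf (α '' Ioo (x-h) v))) := by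
      refine MonotoneOn.tendsto_nhdsWithin_Ioo_right ⟨x, ⟨by linarith, hxv'⟩⟩
        (Mα.mono (fun y hy => ⟨lt_trans hu2 hy.1, hy.2⟩)) ⟨α ((u+(x-h))/2), ?_⟩
      rintro w ⟨y, hy, rfl⟩
      exact Mα ⟨by linarith, by linarith⟩ ⟨lt_trans hu2 hy.1, hy.2⟩ (by linarith [hy.1])
    rwa [rightLim_eq_of_tendsto htd]
  -- limits of the shifted one-sided limits
  have Tf1 : Tendsto (fun h : ℝ => leftLim f (x+h)) (𝓝[>] (0:ℝ)) (𝓝 R) :=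
    aux_left_s4 f x R hfR hfL'
  have Tf2 : Tendsto (fun h : ℝ => rightLim f (x-h)) (𝓝[>] (0:ℝ)) (𝓝 L) :=
    aux_right_s4 f x L hfL hfR'
  have Tα1 : Tendsto (fun h : ℝ => leftLim α (x+h)) (𝓝[>] (0:ℝ)) (𝓝 (rightLim α x)) := by
    rw [hαRx]
    exact aux_left_s4 α x _ hαR (eventually_of_mem hsmall hαL')
  have Tα2 : Tendsto (fun h : ℝ => rightLim α (x-h)) (𝓝[>] (0:ℝ)) (𝓝 (leftLim α x)) := by
    rw [hαLx]
    exact aux_right_s4 α x _ hαL (eventually_of_mem hsmall hαR')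
  -- denominator is positive for small h
  have hden : ∀ᶠ h in 𝓝[>] (0:ℝ),
      leftLim α (x+h) - rightLim α (x-h) ≠ 0 := by
    filter_upwards [hsmall] with h hh
    obtain ⟨hh1, hh2⟩ := hh
    have hv : x + h < v := by have := lt_of_lt_of_le hh2 (min_le_left _ _); linarith
    have hu2 : u < x - h := by have := lt_of_lt_of_le hh2 (min_le_right _ _); linarith
    have h1 : α (x + h/2) ≤ leftLim α (x+h) := by
      refine ge_of_tendsto (hαL' h ⟨hh1, hh2⟩) ?_
      filter_upwards [Ioo_mem_nhdsLT_of_mem (show x + h ∈ Ioc (x + h/2) (x+h) by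
        exact ⟨by linarith, le_refl _⟩)] with y hy
      exact Mα ⟨by linarith, by linarith⟩ ⟨by linarith [hy.1], by linarith [hy.2]⟩
        (le_of_lt hy.1)
    have h2 : rightLim α (x-h) ≤ α (x - h/2) := by
      refine le_of_tendsto (hαR' h ⟨hh1, hh2⟩) ?_
      filter_upwards [Ioo_mem_nhdsGT_of_mem (show x - h ∈ Ico (x-h) (x - h/2) by
        exact ⟨le_refl _, by linarith⟩)] with y hy
      exact Mα ⟨by linarith [hy.1], by linarith [hy.2]⟩ ⟨by linarith, by linarith⟩
        (le_of_lt hy.2)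
    have h3 : α (x - h/2) < α (x + h/2) :=
      hα (hS ⟨by linarith, by linarith⟩) (hS ⟨by linarith, by linarith⟩)
        (by linarith)
    intro hzero; linarith
  -- numerator tends to 0
  have Tnum : Tendsto (fun h : ℝ => leftLim f (x+h) - rightLim f (x-h))
      (𝓝[>] (0:ℝ)) (𝓝 0) := by
    have hd : Tendsto (fun h : ℝ => leftLim α (x+h) - rightLim α (x-h))
        (𝓝[>] (0:ℝ)) (𝓝 0) := by
      have := Tα1.sub Tα2
      rwa [hcont, sub_self] at this
    have hmul := hD.mul hd
    rw [mul_zero] at hmul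
    refine hmul.congr' ?_
    filter_upwards [hden] with h hh
    exact div_mul_cancel₀ _ hh
  -- numerator also tends to R - L
  have Tnum' : Tendsto (fun h : ℝ => leftLim f (x+h) - rightLim f (x-h))
      (𝓝[>] (0:ℝ)) (𝓝 (R - L)) := Tf1.sub Tf2
  have : R - L = 0 := tendsto_nhds_unique Tnum' Tnum
  rw [hLL, hRR]; linarith
end

section
/- Let α be strictly increasing on (a,b) and f regulated on (a,b). If at some point x ∈ (a,b) the derivative (D_α f)(x) exists and α^-(x) ≠ α^+(x), then (D_α f)(x) = (f^+(x) - f^-(x)) / (α^+(x) - α^-(x)). -/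
open Filter Topology Function Set MeasureTheory

/-- If `g` has right limit `R` at `x` and left limits exist near `x` on the right,
then `leftLim g y → R` as `y ↓ x`. -/
lemma my_tendsto_leftLim (g : ℝ → ℝ) (x R : ℝ)
    (hR : Tendsto g (𝓝[>] x) (𝓝 R))
    (hex : ∀ᶠ y in 𝓝[>] x, ∃ L, Tendsto g (𝓝[<] y) (𝓝 L)) :
    Tendsto (fun y => leftLim g y) (𝓝[>] x) (𝓝 R) := by
  rw [Metric.tendsto_nhds]
  intro ε hε
  have h2 : ∀ᶠ t in 𝓝[>] x, dist (g t) R < ε / 2 :=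
    Metric.tendsto_nhds.1 hR _ (by linarith)
  obtain ⟨δ, hδx, hδ⟩ := (nhdsGT_basis x).eventually_iff.1 h2
  filter_upwards [hex, Ioo_mem_nhdsGT hδx] with y hy hy2
  obtain ⟨L, hL⟩ := hy
  have hne : 𝓝[<] y ≠ ⊥ := (nhdsLT_neBot y).ne'
  rw [leftLim_eq_of_tendsto hL]
  have hle : dist L R ≤ ε / 2 := by
    have hcont : Tendsto (fun t => dist (g t) R) (𝓝[<] y) (𝓝 (dist L R)) :=
      hL.dist tendsto_const_nhds
    refine le_of_tendsto hcont ?_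
    filter_upwards [Ioo_mem_nhdsLT hy2.1] with t ht
    exact (hδ ⟨ht.1, ht.2.trans hy2.2⟩).le
  linarith

/-- If `g` has left limit `L` at `x` and right limits exist near `x` on the left,
then `rightLim g y → L` as `y ↑ x`. -/
lemma my_tendsto_rightLim (g : ℝ → ℝ) (x L : ℝ)
    (hL : Tendsto g (𝓝[<] x) (𝓝 L))
    (hex : ∀ᶠ y in 𝓝[<] x, ∃ R, Tendsto g (𝓝[>] y) (𝓝 R)) :
    Tendsto (fun y => rightLim g y) (𝓝[<] x) (𝓝 L) := by
  rw [Metric.tendsto_nhds]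
  intro ε hε
  have h2 : ∀ᶠ t in 𝓝[<] x, dist (g t) L < ε / 2 :=
    Metric.tendsto_nhds.1 hL _ (by linarith)
  obtain ⟨δ, hδx, hδ⟩ := (nhdsLT_basis x).eventually_iff.1 h2
  filter_upwards [hex, Ioo_mem_nhdsLT hδx] with y hy hy2
  obtain ⟨R, hR⟩ := hy
  have hne : 𝓝[>] y ≠ ⊥ := (nhdsGT_neBot y).ne'
  rw [rightLim_eq_of_tendsto hR]
  have hle : dist R L ≤ ε / 2 := by
    have hcont : Tendsto (fun t => dist (g t) L) (𝓝[>] y) (𝓝 (dist R L)) :=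
      hR.dist tendsto_const_nhds
    refine le_of_tendsto hcont ?_
    filter_upwards [Ioo_mem_nhdsGT hy2.2] with t ht
    exact (hδ ⟨hy2.1.trans ht.1, ht.2⟩).le
  linarith

/-- If `(D_α f)(x)` exists and `α⁻(x) ≠ α⁺(x)`, then
`(D_α f)(x) = (f⁺(x) - f⁻(x)) / (α⁺(x) - α⁻(x))`. -/
theorem stmt5 (a b : EReal) (hab : a < b) (f α : ℝ → ℝ)
    (hf : RegulatedOn' f a b) (hα : StrictMonoOn α {x : ℝ | MemI a b x})
    (x A : ℝ) (hx : MemI a b x) (hD : HasDerivAlpha f α x A)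
    (hjump : leftLim α x ≠ rightLim α x) :
    A = (rightLim f x - leftLim f x) / (rightLim α x - leftLim α x) := by
  obtain ⟨⟨Lf, hLf⟩, Rf, hRf⟩ := hf x hx
  obtain ⟨u, hau, hux'⟩ := EReal.exists_between_coe_real hx.1
  obtain ⟨v, hxv', hvb⟩ := EReal.exists_between_coe_real hx.2
  have hux : u < x := by exact_mod_cast hux'
  have hxv : x < v := by exact_mod_cast hxv'
  set S := {t : ℝ | MemI a b t} with hS
  have hSsub : Ioo u v ⊆ S := by
    intro t ht
    exact ⟨lt_trans hau (by exact_mod_cast ht.1), lt_trans (by exact_mod_cast ht.2) hvb⟩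
  have hxuv : x ∈ Ioo u v := ⟨hux, hxv⟩
  have hmono : MonotoneOn α S := hα.monotoneOn
  -- left limits of α on (u, v)
  have hαleft : ∀ y ∈ Ioo u v, ∃ L, Tendsto α (𝓝[<] y) (𝓝 L) := by
    intro y hy
    have hsub : Ioo u y ⊆ S := fun t ht => hSsub ⟨ht.1, ht.2.trans hy.2⟩
    refine ⟨_, MonotoneOn.tendsto_nhdsWithin_Ioo_left (nonempty_Ioo.2 hy.1)
      (hmono.mono hsub) ⟨α y, ?_⟩⟩
    rintro _ ⟨t, ht, rfl⟩
    exact hmono (hsub ht) (hSsub hy) ht.2.le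
  have hαright : ∀ y ∈ Ioo u v, ∃ R, Tendsto α (𝓝[>] y) (𝓝 R) := by
    intro y hy
    have hsub : Ioo y v ⊆ S := fun t ht => hSsub ⟨hy.1.trans ht.1, ht.2⟩
    refine ⟨_, MonotoneOn.tendsto_nhdsWithin_Ioo_right (nonempty_Ioo.2 hy.2)
      (hmono.mono hsub) ⟨α y, ?_⟩⟩
    rintro _ ⟨t, ht, rfl⟩
    exact hmono (hSsub hy) (hsub ht) ht.1.le
  obtain ⟨Lα, hLα⟩ := hαleft x hxuv
  obtain ⟨Rα, hRα⟩ := hαright x hxuv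
  have ev_right : ∀ᶠ y in 𝓝[>] x, y ∈ Ioo u v :=
    mem_of_superset (Ioo_mem_nhdsGT_of_mem ⟨hux.le, hxv⟩) fun _ h => h
  have ev_left : ∀ᶠ y in 𝓝[<] x, y ∈ Ioo u v :=
    mem_of_superset (Ioo_mem_nhdsLT_of_mem ⟨hux, hxv.le⟩) fun _ h => h
  have hfR : Tendsto (fun y => leftLim f y) (𝓝[>] x) (𝓝 Rf) :=
    my_tendsto_leftLim f x Rf hRf (ev_right.mono fun y hy => (hf y (hSsub hy)).1)
  have hfL : Tendsto (fun y => rightLim f y) (𝓝[<] x) (𝓝 Lf) :=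
    my_tendsto_rightLim f x Lf hLf (ev_left.mono fun y hy => (hf y (hSsub hy)).2)
  have hαR : Tendsto (fun y => leftLim α y) (𝓝[>] x) (𝓝 Rα) :=
    my_tendsto_leftLim α x Rα hRα (ev_right.mono fun y hy => hαleft y hy)
  have hαL : Tendsto (fun y => rightLim α y) (𝓝[<] x) (𝓝 Lα) :=
    my_tendsto_rightLim α x Lα hLα (ev_left.mono fun y hy => hαright y hy)
  have eLf : leftLim f x = Lf := leftLim_eq_of_tendsto hLf
  have eRf : rightLim f x = Rf := rightLim_eq_of_tendsto hRf
  have eLα : leftLim α x = Lα := leftLim_eq_of_tendsto hLα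
  have eRα : rightLim α x = Rα := rightLim_eq_of_tendsto hRα
  have hden : Rα - Lα ≠ 0 := by
    rw [eLα, eRα] at hjump
    exact sub_ne_zero_of_ne (Ne.symm hjump)
  have haddx : Tendsto (fun h : ℝ => x + h) (𝓝[>] (0 : ℝ)) (𝓝[>] x) := by
    apply tendsto_nhdsWithin_of_tendsto_nhds_of_eventually_within
    · have : Tendsto (fun h : ℝ => x + h) (𝓝 0) (𝓝 (x + 0)) :=
        (continuous_const.add continuous_id).tendsto 0
      simpa using this.mono_left nhdsWithin_le_nhds
    · filter_upwards [self_mem_nhdsWithin] with h hh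
      exact lt_add_of_pos_right x hh
  have hsubx : Tendsto (fun h : ℝ => x - h) (𝓝[>] (0 : ℝ)) (𝓝[<] x) := by
    apply tendsto_nhdsWithin_of_tendsto_nhds_of_eventually_within
    · have : Tendsto (fun h : ℝ => x - h) (𝓝 0) (𝓝 (x - 0)) :=
        (continuous_const.sub continuous_id).tendsto 0
      simpa using this.mono_left nhdsWithin_le_nhds
    · filter_upwards [self_mem_nhdsWithin] with h hh
      exact sub_lt_self x hh
  have key : Tendsto (fun h : ℝ =>
      (leftLim f (x + h) - rightLim f (x - h)) /
        (leftLim α (x + h) - rightLim α (x - h)))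
      (𝓝[>] (0 : ℝ)) (𝓝 ((Rf - Lf) / (Rα - Lα))) :=
    Tendsto.div ((hfR.comp haddx).sub (hfL.comp hsubx))
      ((hαR.comp haddx).sub (hαL.comp hsubx)) hden
  have hA := tendsto_nhds_unique hD key
  rw [hA, eLf, eRf, eLα, eRα]
end

section
/- Quotient rule for the α-derivative: Let f, g be regulated on (a,b), α strictly increasing on (a,b), and x ∈ (a,b) with g^-(x)·g^+(x) ≠ 0. If (D_α f)(x) and (D_α g)(x) exist, then (D_α (f/g))(x) exists and equals (g^-(x)(D_α f)(x) - f^-(x)(D_α g)(x)) / (g^-(x) g^+(x)). -/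
open Filter Topology Function Set MeasureTheory

/-- Algebraic identity behind the quotient rule. -/
lemma quot_alg (A B C D E : ℝ) (hC : C ≠ 0) (hD : D ≠ 0) :
    (A / C - B / D) / E = (D * ((A - B) / E) - B * ((C - D) / E)) / (C * D) := by
  rcases eq_or_ne E 0 with rfl | hE
  · simp
  · field_simp
    ring

/-- The left limits just to the right of `x` tend to the right limit at `x`. -/
lemma tendsto_leftLim_aux (g : ℝ → ℝ) (x R : ℝ)
    (hreg : ∀ᶠ h in 𝓝[>] (0 : ℝ), ∃ L : ℝ, Tendsto g (𝓝[<] (x + h)) (𝓝 L))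
    (hR : Tendsto g (𝓝[>] x) (𝓝 R)) :
    Tendsto (fun h => leftLim g (x + h)) (𝓝[>] (0 : ℝ)) (𝓝 R) := by
  rw [Metric.tendsto_nhds]
  intro ε hε
  have h2 : {t : ℝ | dist (g t) R < ε / 2} ∈ 𝓝[>] x :=
    Metric.tendsto_nhds.1 hR (ε / 2) (by positivity)
  obtain ⟨u, hu, hsub⟩ := mem_nhdsGT_iff_exists_Ioo_subset.1 h2
  have hδ : (0 : ℝ) < u - x := sub_pos.2 (mem_Ioi.1 hu)
  filter_upwards [hreg, Ioo_mem_nhdsGT_of_mem (by constructor <;> simp [hδ] :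
      (0 : ℝ) ∈ Ico (0 : ℝ) (u - x))] with h hL hh
  obtain ⟨L, hL⟩ := hL
  have hne : 𝓝[<] (x + h) ≠ ⊥ := by
    have : (0:ℝ) < h := hh.1
    exact (nhdsLT_neBot (x + h)).ne
  rw [leftLim_eq_of_tendsto hL]
  have hmem : Ioo x (x + h) ∈ 𝓝[<] (x + h) :=
    Ioo_mem_nhdsLT_of_mem ⟨by linarith [hh.1], le_refl _⟩
  have key : ∀ᶠ t in 𝓝[<] (x + h), dist (g t) R ≤ ε / 2 := by
    filter_upwards [hmem] with t ht
    exact le_of_lt (hsub ⟨ht.1, by linarith [ht.2, hh.2]⟩)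
  have hd : dist L R ≤ ε / 2 :=
    le_of_tendsto (hL.dist (tendsto_const_nhds : Tendsto (fun _ => R) _ _))
      (by simpa using key)
  linarith

/-- The right limits just to the left of `x` tend to the left limit at `x`. -/
lemma tendsto_rightLim_aux (g : ℝ → ℝ) (x L : ℝ)
    (hreg : ∀ᶠ h in 𝓝[>] (0 : ℝ), ∃ R : ℝ, Tendsto g (𝓝[>] (x - h)) (𝓝 R))
    (hL : Tendsto g (𝓝[<] x) (𝓝 L)) :
    Tendsto (fun h => rightLim g (x - h)) (𝓝[>] (0 : ℝ)) (𝓝 L) := by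
  rw [Metric.tendsto_nhds]
  intro ε hε
  have h2 : {t : ℝ | dist (g t) L < ε / 2} ∈ 𝓝[<] x :=
    Metric.tendsto_nhds.1 hL (ε / 2) (by positivity)
  obtain ⟨u, hu, hsub⟩ := mem_nhdsLT_iff_exists_Ioo_subset.1 h2
  have hδ : (0 : ℝ) < x - u := sub_pos.2 (mem_Iio.1 hu)
  filter_upwards [hreg, Ioo_mem_nhdsGT_of_mem (by constructor <;> simp [hδ] :
      (0 : ℝ) ∈ Ico (0 : ℝ) (x - u))] with h hR hh
  obtain ⟨R, hR⟩ := hR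
  have hne : 𝓝[>] (x - h) ≠ ⊥ := (nhdsGT_neBot (x - h)).ne
  rw [rightLim_eq_of_tendsto hR]
  have hmem : Ioo (x - h) x ∈ 𝓝[>] (x - h) :=
    Ioo_mem_nhdsGT_of_mem ⟨le_refl _, by linarith [hh.1]⟩
  have key : ∀ᶠ t in 𝓝[>] (x - h), dist (g t) L ≤ ε / 2 := by
    filter_upwards [hmem] with t ht
    exact le_of_lt (hsub ⟨by linarith [ht.1, hh.2], ht.2⟩)
  have hd : dist R L ≤ ε / 2 :=
    le_of_tendsto (hR.dist (tendsto_const_nhds : Tendsto (fun _ => L) _ _))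
      (by simpa using key)
  linarith

/-- Quotient rule for the symmetric `α`-derivative. -/
theorem stmt8 (a b : EReal) (hab : a < b) (f g α : ℝ → ℝ)
    (hf : RegulatedOn' f a b) (hg : RegulatedOn' g a b)
    (hα : StrictMonoOn α {x : ℝ | MemI a b x})
    (x Df Dg : ℝ) (hx : MemI a b x)
    (hg0 : leftLim g x * rightLim g x ≠ 0)
    (hDf : HasDerivAlpha f α x Df) (hDg : HasDerivAlpha g α x Dg) :
    HasDerivAlpha (fun t => f t / g t) α x
      ((leftLim g x * Df - leftLim f x * Dg) / (leftLim g x * rightLim g x)) := by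
  have hgl : leftLim g x ≠ 0 := fun h => hg0 (by simp [h])
  have hgr : rightLim g x ≠ 0 := fun h => hg0 (by simp [h])
  -- eventual membership of x ± h in (a, b)
  have tcoe : Tendsto (fun h : ℝ => ((x + h : ℝ) : EReal)) (𝓝[>] (0:ℝ)) (𝓝 (x : EReal)) := by
    have : Tendsto (fun h : ℝ => x + h) (𝓝 (0:ℝ)) (𝓝 x) := by
      have h0 : Tendsto (fun h : ℝ => x + h) (𝓝 0) (𝓝 (x + 0)) := (continuous_const.add continuous_id).tendsto (0:ℝ); simpa using h0
    exact (continuous_coe_real_ereal.tendsto x).comp (this.mono_left nhdsWithin_le_nhds)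
  have tcoe' : Tendsto (fun h : ℝ => ((x - h : ℝ) : EReal)) (𝓝[>] (0:ℝ)) (𝓝 (x : EReal)) := by
    have : Tendsto (fun h : ℝ => x - h) (𝓝 (0:ℝ)) (𝓝 x) := by
      have h0 : Tendsto (fun h : ℝ => x - h) (𝓝 0) (𝓝 (x - 0)) := (continuous_const.sub continuous_id).tendsto (0:ℝ); simpa using h0
    exact (continuous_coe_real_ereal.tendsto x).comp (this.mono_left nhdsWithin_le_nhds)
  have E1p : ∀ᶠ h in 𝓝[>] (0:ℝ), MemI a b (x + h) := by
    have h1 : ∀ᶠ h in 𝓝[>] (0:ℝ), ((x + h : ℝ) : EReal) < b :=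
      tcoe.eventually_lt_const hx.2
    have h2 : ∀ᶠ h in 𝓝[>] (0:ℝ), a < ((x + h : ℝ) : EReal) :=
      tcoe.eventually_const_lt hx.1
    filter_upwards [h1, h2] with h h1 h2 using ⟨h2, h1⟩
  have E1m : ∀ᶠ h in 𝓝[>] (0:ℝ), MemI a b (x - h) := by
    have h1 : ∀ᶠ h in 𝓝[>] (0:ℝ), ((x - h : ℝ) : EReal) < b :=
      tcoe'.eventually_lt_const hx.2
    have h2 : ∀ᶠ h in 𝓝[>] (0:ℝ), a < ((x - h : ℝ) : EReal) :=
      tcoe'.eventually_const_lt hx.1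
    filter_upwards [h1, h2] with h h1 h2 using ⟨h2, h1⟩
  -- regulated data at x
  obtain ⟨⟨Lf, hLf⟩, ⟨Rf, hRf⟩⟩ := hf x hx
  obtain ⟨⟨Lg, hLg⟩, ⟨Rg, hRg⟩⟩ := hg x hx
  have hLfx : leftLim f x = Lf := leftLim_eq_of_tendsto hLf
  have hLgx : leftLim g x = Lg := leftLim_eq_of_tendsto hLg
  have hRgx : rightLim g x = Rg := rightLim_eq_of_tendsto hRg
  -- key limits of one-sided limits
  have regfl : ∀ᶠ h in 𝓝[>] (0:ℝ), ∃ L : ℝ, Tendsto f (𝓝[<] (x + h)) (𝓝 L) :=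
    E1p.mono fun h hh => (hf _ hh).1
  have reggl : ∀ᶠ h in 𝓝[>] (0:ℝ), ∃ L : ℝ, Tendsto g (𝓝[<] (x + h)) (𝓝 L) :=
    E1p.mono fun h hh => (hg _ hh).1
  have regfr : ∀ᶠ h in 𝓝[>] (0:ℝ), ∃ R : ℝ, Tendsto f (𝓝[>] (x - h)) (𝓝 R) :=
    E1m.mono fun h hh => (hf _ hh).2
  have reggr : ∀ᶠ h in 𝓝[>] (0:ℝ), ∃ R : ℝ, Tendsto g (𝓝[>] (x - h)) (𝓝 R) :=
    E1m.mono fun h hh => (hg _ hh).2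
  have tA : Tendsto (fun h => leftLim g (x + h)) (𝓝[>] (0:ℝ)) (𝓝 (rightLim g x)) := by
    rw [hRgx]; exact tendsto_leftLim_aux g x Rg reggl hRg
  have tB : Tendsto (fun h => rightLim g (x - h)) (𝓝[>] (0:ℝ)) (𝓝 (leftLim g x)) := by
    rw [hLgx]; exact tendsto_rightLim_aux g x Lg reggr hLg
  have tC : Tendsto (fun h => rightLim f (x - h)) (𝓝[>] (0:ℝ)) (𝓝 (leftLim f x)) := by
    rw [hLfx]; exact tendsto_rightLim_aux f x Lf regfr hLf
  have E3 : ∀ᶠ h in 𝓝[>] (0:ℝ), leftLim g (x + h) ≠ 0 := tA.eventually_ne hgr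
  have E4 : ∀ᶠ h in 𝓝[>] (0:ℝ), rightLim g (x - h) ≠ 0 := tB.eventually_ne hgl
  -- the auxiliary expression and its limit
  have main : Tendsto (fun h =>
      (rightLim g (x - h) *
          ((leftLim f (x + h) - rightLim f (x - h)) /
            (leftLim α (x + h) - rightLim α (x - h))) -
        rightLim f (x - h) *
          ((leftLim g (x + h) - rightLim g (x - h)) /
            (leftLim α (x + h) - rightLim α (x - h)))) /
        (leftLim g (x + h) * rightLim g (x - h)))
      (𝓝[>] (0:ℝ))
      (𝓝 ((leftLim g x * Df - leftLim f x * Dg) / (leftLim g x * rightLim g x))) := by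
    have hnum : Tendsto _ (𝓝[>] (0:ℝ)) (𝓝 (leftLim g x * Df - leftLim f x * Dg)) :=
      (tB.mul hDf).sub (tC.mul hDg)
    have hden : Tendsto _ (𝓝[>] (0:ℝ)) (𝓝 (rightLim g x * leftLim g x)) := tA.mul tB
    have := hnum.div hden (mul_ne_zero hgr hgl)
    rw [show rightLim g x * leftLim g x = leftLim g x * rightLim g x from mul_comm _ _] at this
    exact this
  refine main.congr' ?_
  filter_upwards [E1p, E1m, E3, E4, regfl, reggl, regfr] with h hhp hhm h3 h4 hfl hgl' hfr
  obtain ⟨Lfh, hLfh⟩ := hfl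
  obtain ⟨Lgh, hLgh⟩ := hgl'
  obtain ⟨Rfh, hRfh⟩ := hfr
  obtain ⟨Rgh, hRgh⟩ := (hg _ hhm).2
  have e1 : leftLim f (x + h) = Lfh :=
    leftLim_eq_of_tendsto hLfh
  have e2 : leftLim g (x + h) = Lgh :=
    leftLim_eq_of_tendsto hLgh
  have e3 : rightLim f (x - h) = Rfh :=
    rightLim_eq_of_tendsto hRfh
  have e4 : rightLim g (x - h) = Rgh :=
    rightLim_eq_of_tendsto hRgh
  have hLgh0 : Lgh ≠ 0 := e2 ▸ h3
  have hRgh0 : Rgh ≠ 0 := e4 ▸ h4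
  have eq1 : leftLim (fun t => f t / g t) (x + h) = Lfh / Lgh :=
    leftLim_eq_of_tendsto (hLfh.div hLgh hLgh0)
  have eq2 : rightLim (fun t => f t / g t) (x - h) = Rfh / Rgh :=
    rightLim_eq_of_tendsto (hRfh.div hRgh hRgh0)
  rw [e1, e2, e3, e4, eq1, eq2]
  exact (quot_alg Lfh Rfh Lgh Rgh _ hLgh0 hRgh0).symm
end

section
/- Rolle's theorem for regulated functions: Let f be regulated on (a,b), α strictly increasing on (a,b), with (D_α f)(x) existing for all x ∈ (a,b). If f^+(s) = f^-(t) for some a < s < t < b, then there exist u, v ∈ (s,t) with (D_α f)(u) · (D_α f)(v) ≤ 0. -/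
open Filter Topology Function Set MeasureTheory

/- ----------------- auxiliary lemmas ----------------- -/

lemma aux_tendsto_add (z : ℝ) : Tendsto (fun h : ℝ => z + h) (𝓝[>] (0:ℝ)) (𝓝[>] z) := by
  apply tendsto_nhdsWithin_of_tendsto_nhds_of_eventually_within
  · have : Tendsto (fun h : ℝ => z + h) (𝓝 (0:ℝ)) (𝓝 (z + 0)) :=
      (tendsto_const_nhds.add tendsto_id)
    simpa using this.mono_left nhdsWithin_le_nhds
  · filter_upwards [self_mem_nhdsWithin] with h hh
    simpa using (lt_add_of_pos_right z hh)

lemma aux_tendsto_sub (z : ℝ) : Tendsto (fun h : ℝ => z - h) (𝓝[>] (0:ℝ)) (𝓝[<] z) := by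
  apply tendsto_nhdsWithin_of_tendsto_nhds_of_eventually_within
  · have : Tendsto (fun h : ℝ => z - h) (𝓝 (0:ℝ)) (𝓝 (z - 0)) :=
      (tendsto_const_nhds.sub tendsto_id)
    simpa using this.mono_left nhdsWithin_le_nhds
  · filter_upwards [self_mem_nhdsWithin] with h hh
    have : (0:ℝ) < h := hh
    simp only [mem_Iio]
    linarith

lemma aux_tendsto_const_sub (c x : ℝ) :
    Tendsto (fun z : ℝ => c - z) (𝓝[>] x) (𝓝[<] (c - x)) := by
  apply tendsto_nhdsWithin_of_tendsto_nhds_of_eventually_within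
  · exact (tendsto_const_nhds.sub tendsto_id).mono_left nhdsWithin_le_nhds
  · filter_upwards [self_mem_nhdsWithin] with z hz
    have : x < z := hz
    simp only [mem_Iio]
    linarith

/-- The key "sup" lemma: if `P (x-h) < Q (x+h)` for small symmetric `h` around every point,
`Q ≤ P`, and `Q` tends to `P x` from the right, then from any point `z₀` where `β < P z₀`
one finds points arbitrarily close to `t` where `β < Q`. -/
lemma myCore (s t : ℝ) (P Q : ℝ → ℝ)
    (A1 : ∀ z ∈ Ioo s t, Q z ≤ P z)
    (A2 : ∀ x ∈ Ioo s t, ∃ h₀, 0 < h₀ ∧ h₀ ≤ x - s ∧ h₀ ≤ t - x ∧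
      ∀ h, 0 < h → h < h₀ → P (x - h) < Q (x + h))
    (A3 : ∀ x ∈ Ioo s t, Tendsto Q (𝓝[>] x) (𝓝 (P x)))
    (β z₀ q : ℝ) (hz₀ : z₀ ∈ Ioo s t) (hβ : β < P z₀) (hq1 : z₀ ≤ q) (hq2 : q < t) :
    ∃ z, q < z ∧ z < t ∧ β < Q z := by
  set A : Set ℝ := {z | z ∈ Icc z₀ q ∧ β < P z} with hA
  have hz₀A : z₀ ∈ A := ⟨⟨le_refl _, hq1⟩, hβ⟩
  have hAne : A.Nonempty := ⟨z₀, hz₀A⟩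
  have hbdd : BddAbove A := ⟨q, fun z hz => hz.1.2⟩
  set c := sSup A with hc
  have hz₀c : z₀ ≤ c := le_csSup hbdd hz₀A
  have hcq : c ≤ q := csSup_le hAne (fun z hz => hz.1.2)
  have hcIoo : c ∈ Ioo s t := ⟨lt_of_lt_of_le hz₀.1 hz₀c, lt_of_le_of_lt hcq hq2⟩
  obtain ⟨h₀, h₀pos, h₀s, h₀t, hA2⟩ := A2 c hcIoo
  by_cases hcase : ∃ z ∈ A, c - h₀ < z ∧ z < c
  · obtain ⟨z, hzA, hz1, hz2⟩ := hcase
    have hhpos : 0 < c - z := by linarith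
    have hhlt : c - z < h₀ := by linarith
    have hstep := hA2 (c - z) hhpos hhlt
    have hz' : c - (c - z) = z := by ring
    rw [hz'] at hstep
    have hβQ : β < Q (c + (c - z)) := lt_trans hzA.2 hstep
    have hct : c + (c - z) < t := by linarith
    have hcc : c < c + (c - z) := by linarith
    have hIoo' : c + (c - z) ∈ Ioo s t := ⟨lt_trans hcIoo.1 hcc, hct⟩
    by_cases hle : c + (c - z) ≤ q
    · exfalso
      have : c + (c - z) ∈ A :=
        ⟨⟨le_trans hz₀c hcc.le, hle⟩, lt_of_lt_of_le hβQ (A1 _ hIoo')⟩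
      have := le_csSup hbdd this
      linarith
    · exact ⟨c + (c - z), by linarith, hct, hβQ⟩
  · have hcA : c ∈ A := by
      by_contra hcA
      have hub : ∀ z ∈ A, z ≤ c - h₀ := by
        intro z hz
        have hzc : z ≤ c := le_csSup hbdd hz
        rcases eq_or_lt_of_le hzc with rfl | hlt
        · exact absurd hz hcA
        · by_contra hgt
          exact hcase ⟨z, hz, by linarith, hlt⟩
      have := csSup_le hAne hub
      linarith
    have hten := A3 c hcIoo
    have hev : ∀ᶠ y in 𝓝[>] c, β < Q y := hten.eventually (eventually_gt_nhds hcA.2)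
    have hev2 : ∀ᶠ y in 𝓝[>] c, y ∈ Ioo c t :=
      Ioo_mem_nhdsGT_of_mem ⟨le_refl _, hcIoo.2⟩
    obtain ⟨y, hy1, hy2⟩ := (hev.and hev2).exists
    by_cases hyq : y ≤ q
    · exfalso
      have : y ∈ A := ⟨⟨le_trans hz₀c hy2.1.le, hyq⟩,
        lt_of_lt_of_le hy1 (A1 _ ⟨lt_trans hcIoo.1 hy2.1, hy2.2⟩)⟩
      have := le_csSup hbdd this
      have := hy2.1
      linarith
    · exact ⟨y, lt_of_not_ge hyq, hy2.2, hy1⟩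

/-- Main monotonicity lemma: under the symmetric-increase hypotheses, `P s < Q t`. -/
lemma myMain (s t : ℝ) (hst : s < t) (P Q : ℝ → ℝ)
    (A1 : ∀ z ∈ Ioo s t, Q z ≤ P z)
    (A2 : ∀ x ∈ Ioo s t, ∃ h₀, 0 < h₀ ∧ h₀ ≤ x - s ∧ h₀ ≤ t - x ∧
      ∀ h, 0 < h → h < h₀ → P (x - h) < Q (x + h))
    (A3 : ∀ x ∈ Ico s t, Tendsto Q (𝓝[>] x) (𝓝 (P x)))
    (A4 : ∀ x ∈ Ioc s t, Tendsto P (𝓝[<] x) (𝓝 (Q x))) :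
    P s < Q t := by
  by_cases hex : ∃ z ∈ Ioo s t, P s < P z
  · obtain ⟨z₀, hz₀, hPz₀⟩ := hex
    set β := (P s + P z₀) / 2 with hβdef
    have hβ1 : P s < β := by simp only [hβdef]; linarith
    have hβ2 : β < P z₀ := by simp only [hβdef]; linarith
    have key : ∀ q, z₀ ≤ q → q < t → ∃ z, q < z ∧ z < t ∧ β < Q z := by
      intro q hq1 hq2
      exact myCore s t P Q A1 A2 (fun x hx => A3 x ⟨hx.1.le, hx.2⟩) β z₀ q hz₀ hβ2 hq1 hq2
    have hfreq : ∃ᶠ z in 𝓝[<] t, β < P z := by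
      rw [Filter.frequently_iff]
      intro U hU
      rw [mem_nhdsLT_iff_exists_Ioo_subset] at hU
      obtain ⟨w, hw, hsub⟩ := hU
      obtain ⟨z, hz1, hz2, hz3⟩ := key (max w z₀) (le_max_right _ _)
        (max_lt hw hz₀.2)
      refine ⟨z, hsub ⟨lt_of_le_of_lt (le_max_left _ _) hz1, hz2⟩, ?_⟩
      have hzIoo : z ∈ Ioo s t := ⟨lt_trans hz₀.1 (lt_of_le_of_lt (le_max_right _ _) hz1), hz2⟩
      exact lt_of_lt_of_le hz3 (A1 _ hzIoo)
    have hPt := A4 t ⟨hst, le_refl t⟩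
    have hβQt : β ≤ Q t := by
      by_contra hlt
      push_neg at hlt
      have hev : ∀ᶠ z in 𝓝[<] t, P z < β := hPt.eventually (eventually_lt_nhds hlt)
      obtain ⟨z, hz1, hz2⟩ := (hfreq.and_eventually hev).exists
      linarith
    linarith
  · push_neg at hex
    exfalso
    set x := (s + t) / 2 with hxdef
    have hx : x ∈ Ioo s t := ⟨by simp only [hxdef]; linarith, by simp only [hxdef]; linarith⟩
    obtain ⟨h₀, h₀pos, h₀s, h₀t, hA2⟩ := A2 x hx
    set h := h₀ / 2 with hhdef
    have hPQ : P (x - h) < Q (x + h) := hA2 h (by simp only [hhdef]; linarith)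
      (by simp only [hhdef]; linarith)
    have hxmh : x - h ∈ Ioo s t := ⟨by simp only [hhdef]; linarith, by simp only [hhdef]; linarith⟩
    have hxph : x + h ∈ Ioo s t := ⟨by simp only [hhdef]; linarith, by simp only [hhdef]; linarith⟩
    set γ := (P (x - h) + Q (x + h)) / 2 with hγdef
    have hγ1 : P (x - h) < γ := by simp only [hγdef]; linarith
    have hγ2 : γ < Q (x + h) := by simp only [hγdef]; linarith
    -- mirrored data
    set P' : ℝ → ℝ := fun z => -Q (s + t - z) with hP'
    set Q' : ℝ → ℝ := fun z => -P (s + t - z) with hQ'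
    have hmirror : ∀ z : ℝ, z ∈ Ioo s t → s + t - z ∈ Ioo s t := by
      intro z hz
      exact ⟨by linarith [hz.2], by linarith [hz.1]⟩
    have A1' : ∀ z ∈ Ioo s t, Q' z ≤ P' z := by
      intro z hz
      simp only [hP', hQ', neg_le_neg_iff]
      exact A1 _ (hmirror z hz)
    have A2' : ∀ x' ∈ Ioo s t, ∃ h₀', 0 < h₀' ∧ h₀' ≤ x' - s ∧ h₀' ≤ t - x' ∧
        ∀ h', 0 < h' → h' < h₀' → P' (x' - h') < Q' (x' + h') := by
      intro x' hx'
      obtain ⟨h₁, h₁pos, h₁s, h₁t, hh₁⟩ := A2 (s + t - x') (hmirror x' hx')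
      refine ⟨h₁, h₁pos, by linarith, by linarith, ?_⟩
      intro h' hp hl
      have := hh₁ h' hp hl
      simp only [hP', hQ', neg_lt_neg_iff]
      have e1 : s + t - (x' + h') = s + t - x' - h' := by ring
      have e2 : s + t - (x' - h') = s + t - x' + h' := by ring
      rw [e1, e2]
      exact this
    have A3' : ∀ x' ∈ Ioo s t, Tendsto Q' (𝓝[>] x') (𝓝 (P' x')) := by
      intro x' hx'
      have hmem : s + t - x' ∈ Ioc s t := ⟨(hmirror x' hx').1, (hmirror x' hx').2.le⟩
      have h4 := A4 _ hmem
      have hmap : Tendsto (fun z : ℝ => s + t - z) (𝓝[>] x') (𝓝[<] (s + t - x')) :=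
        aux_tendsto_const_sub (s + t) x'
      have : Tendsto (fun z : ℝ => P (s + t - z)) (𝓝[>] x') (𝓝 (Q (s + t - x'))) :=
        h4.comp hmap
      simpa only [hQ', hP'] using this.neg
    have key' : ∀ q, s + t - (x - h) ≤ q → q < t → ∃ z, q < z ∧ z < t ∧ -γ < Q' z := by
      intro q hq1 hq2
      refine myCore s t P' Q' A1' A2' A3' (-γ) (s + t - (x - h)) q (hmirror _ hxmh) ?_ hq1 hq2
      have : P' (s + t - (x - h)) = -Q (x - h) := by
        simp only [hP']
        congr 1
        congr 1
        ring
      rw [this]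
      have : Q (x - h) ≤ P (x - h) := A1 _ hxmh
      linarith
    have hfreq : ∃ᶠ y in 𝓝[>] s, Q y < γ := by
      rw [Filter.frequently_iff]
      intro U hU
      rw [mem_nhdsGT_iff_exists_Ioo_subset] at hU
      obtain ⟨u, hu, hsub⟩ := hU
      have hu' : s < u := hu
      have hz₀' : s + t - (x - h) ∈ Ioo s t := hmirror _ hxmh
      obtain ⟨z, hz1, hz2, hz3⟩ := key' (max (s + t - u) (s + t - (x - h)))
        (le_max_right _ _) (max_lt (by linarith) hz₀'.2)
      set y := s + t - z with hydef
      have hyIoo : y ∈ Ioo s t := hmirror z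
        ⟨lt_trans hz₀'.1 (lt_of_le_of_lt (le_max_right _ _) hz1), hz2⟩
      have hyu : y < u := by
        have : s + t - u < z := lt_of_le_of_lt (le_max_left _ _) hz1
        simp only [hydef]; linarith
      have hQ'z : -γ < -P y := hz3
      have hPy : P y < γ := by linarith
      refine ⟨y, hsub ⟨hyIoo.1, hyu⟩, ?_⟩
      exact lt_of_le_of_lt (A1 _ hyIoo) hPy
    have hQs := A3 s ⟨le_refl s, hst⟩
    have hPsγ : P s ≤ γ := by
      by_contra hlt
      push_neg at hlt
      have hev : ∀ᶠ y in 𝓝[>] s, γ < Q y := hQs.eventually (eventually_gt_nhds hlt)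
      obtain ⟨y, hy1, hy2⟩ := (hfreq.and_eventually hev).exists
      linarith
    have h5 : Q (x + h) ≤ P (x + h) := A1 _ hxph
    have : P (x + h) ≤ P s := hex _ hxph
    linarith

/-- membership helper -/
lemma memI_of_between {a b : EReal} {s t z : ℝ} (hs : MemI a b s) (ht : MemI a b t)
    (h1 : s ≤ z) (h2 : z ≤ t) : MemI a b z := by
  constructor
  · exact lt_of_lt_of_le hs.1 (by exact_mod_cast h1)
  · exact lt_of_le_of_lt (by exact_mod_cast h2) ht.2

/-- For regulated `f`, `leftLim f y → rightLim f x` as `y ↓ x`. -/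
lemma reg_right {f : ℝ → ℝ} {a b : EReal} (hf : RegulatedOn' f a b) {x : ℝ}
    (hx : MemI a b x) : Tendsto (leftLim f) (𝓝[>] x) (𝓝 (rightLim f x)) := by
  obtain ⟨R, hR⟩ := (hf x hx).2
  have hrl : rightLim f x = R :=
    rightLim_eq_of_tendsto hR
  rw [hrl]
  obtain ⟨d, hd1, hd2⟩ := EReal.exists_between_coe_real hx.2
  rw [Metric.tendsto_nhdsWithin_nhds]
  intro ε εpos
  rw [Metric.tendsto_nhdsWithin_nhds] at hR
  obtain ⟨δ, δpos, hδ⟩ := hR (ε / 2) (by linarith)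
  refine ⟨min δ (d - x), lt_min δpos (by exact_mod_cast sub_pos.2 (by exact_mod_cast hd1)), ?_⟩
  intro y hy hdist
  have hxy : x < y := hy
  have hyd : y < d := by
    have h1 : |y - x| < d - x := lt_of_lt_of_le (by simpa [Real.dist_eq] using hdist)
      (min_le_right _ _)
    have := abs_lt.1 h1
    linarith [this.1, this.2]
  have hyδ : dist y x < δ := lt_of_lt_of_le hdist (min_le_left _ _)
  have hymem : MemI a b y := ⟨lt_trans hx.1 (by exact_mod_cast hxy),
    lt_trans (by exact_mod_cast hyd) hd2⟩
  obtain ⟨L, hL⟩ := (hf y hymem).1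
  have hll : leftLim f y = L :=
    leftLim_eq_of_tendsto hL
  rw [hll]
  -- L is a limit of values f z, z ∈ (x, y), each within ε/2 of R
  have hev : ∀ᶠ z in 𝓝[<] y, dist (f z) R ≤ ε / 2 := by
    have hIoo : Ioo x y ∈ 𝓝[<] y := Ioo_mem_nhdsLT_of_mem ⟨hxy, le_refl y⟩
    filter_upwards [hIoo] with z hz
    have hzx : x < z := hz.1
    have hzd : dist z x < δ := by
      rw [Real.dist_eq, abs_of_pos (by linarith)]
      have : dist y x = |y - x| := Real.dist_eq y x
      rw [Real.dist_eq, abs_of_pos (by linarith)] at hyδ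
      linarith [hz.2]
    exact (hδ hzx hzd).le
  have htd : Tendsto (fun z => dist (f z) R) (𝓝[<] y) (𝓝 (dist L R)) :=
    (hL.dist tendsto_const_nhds)
  have : dist L R ≤ ε / 2 := le_of_tendsto htd hev
  linarith

/-- For regulated `f`, `rightLim f y → leftLim f x` as `y ↑ x`. -/
lemma reg_left {f : ℝ → ℝ} {a b : EReal} (hf : RegulatedOn' f a b) {x : ℝ}
    (hx : MemI a b x) : Tendsto (rightLim f) (𝓝[<] x) (𝓝 (leftLim f x)) := by
  obtain ⟨L, hL⟩ := (hf x hx).1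
  have hll : leftLim f x = L :=
    leftLim_eq_of_tendsto hL
  rw [hll]
  obtain ⟨d, hd1, hd2⟩ := EReal.exists_between_coe_real hx.1
  rw [Metric.tendsto_nhdsWithin_nhds]
  intro ε εpos
  rw [Metric.tendsto_nhdsWithin_nhds] at hL
  obtain ⟨δ, δpos, hδ⟩ := hL (ε / 2) (by linarith)
  have hdx : d < x := by exact_mod_cast hd2
  refine ⟨min δ (x - d), lt_min δpos (by linarith), ?_⟩
  intro y hy hdist
  have hxy : y < x := hy
  have hyd : d < y := by
    have h1 : |y - x| < x - d := lt_of_lt_of_le (by simpa [Real.dist_eq] using hdist)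
      (min_le_right _ _)
    have := abs_lt.1 h1
    linarith [this.1, this.2]
  have hyδ : dist y x < δ := lt_of_lt_of_le hdist (min_le_left _ _)
  have hymem : MemI a b y := ⟨lt_trans hd1 (by exact_mod_cast hyd),
    lt_trans (by exact_mod_cast hxy) hx.2⟩
  obtain ⟨R, hR⟩ := (hf y hymem).2
  have hrl : rightLim f y = R :=
    rightLim_eq_of_tendsto hR
  rw [hrl]
  have hev : ∀ᶠ z in 𝓝[>] y, dist (f z) L ≤ ε / 2 := by
    have hIoo : Ioo y x ∈ 𝓝[>] y := Ioo_mem_nhdsGT_of_mem ⟨le_refl y, hxy⟩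
    filter_upwards [hIoo] with z hz
    have hzx : z < x := hz.2
    have hzd : dist z x < δ := by
      rw [Real.dist_eq, abs_of_neg (by linarith)]
      rw [Real.dist_eq, abs_of_neg (by linarith)] at hyδ
      linarith [hz.1]
    exact (hδ hzx hzd).le
  have htd : Tendsto (fun z => dist (f z) L) (𝓝[>] y) (𝓝 (dist R L)) :=
    (hR.dist tendsto_const_nhds)
  have : dist R L ≤ ε / 2 := le_of_tendsto htd hev
  calc dist R L ≤ ε / 2 := this
    _ < ε := by linarith

/-- Positivity of the denominator. -/
lemma denom_pos {α : ℝ → ℝ} {a b : EReal} (hα : StrictMonoOn α {x : ℝ | MemI a b x})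
    {w y : ℝ} (hw : MemI a b w) (hy : MemI a b y) (hwy : w < y) :
    rightLim α w < leftLim α y := by
  have hsub : Ioo w y ⊆ {x : ℝ | MemI a b x} := by
    intro z hz
    exact memI_of_between hw hy hz.1.le hz.2.le
  have hne : (Ioo w y).Nonempty := nonempty_Ioo.2 hwy
  have hMon : MonotoneOn α (Ioo w y) := (hα.monotoneOn).mono hsub
  have hbddB : BddBelow (α '' Ioo w y) := by
    refine ⟨α w, ?_⟩
    rintro v ⟨u, hu, rfl⟩
    exact (hα hw (hsub hu) hu.1).le
  have hbddA : BddAbove (α '' Ioo w y) := by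
    refine ⟨α y, ?_⟩
    rintro v ⟨u, hu, rfl⟩
    exact (hα (hsub hu) hy hu.2).le
  have hrw : rightLim α w = sInf (α '' Ioo w y) :=
    rightLim_eq_of_tendsto
      (MonotoneOn.tendsto_nhdsWithin_Ioo_right hne hMon hbddB)
  have hly : leftLim α y = sSup (α '' Ioo w y) :=
    leftLim_eq_of_tendsto
      (MonotoneOn.tendsto_nhdsWithin_Ioo_left hne hMon hbddA)
  rw [hrw, hly]
  set p₁ := w + (y - w) / 3 with hp₁
  set p₂ := w + 2 * (y - w) / 3 with hp₂
  have hp₁m : p₁ ∈ Ioo w y := ⟨by simp only [hp₁]; linarith, by simp only [hp₁]; linarith⟩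
  have hp₂m : p₂ ∈ Ioo w y := ⟨by simp only [hp₂]; linarith, by simp only [hp₂]; linarith⟩
  calc sInf (α '' Ioo w y) ≤ α p₁ := csInf_le hbddB (mem_image_of_mem α hp₁m)
    _ < α p₂ := hα (hsub hp₁m) (hsub hp₂m) (by simp only [hp₁, hp₂]; linarith)
    _ ≤ sSup (α '' Ioo w y) := le_csSup hbddA (mem_image_of_mem α hp₂m)

/-- From a nonzero symmetric derivative we extract a sign condition on the numerator. -/
lemma step_lemma {f α : ℝ → ℝ} {a b : EReal} (hα : StrictMonoOn α {x : ℝ | MemI a b x})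
    {x A : ℝ} (hD : HasDerivAlpha f α x A) (hA : A ≠ 0)
    {s t : ℝ} (hs : MemI a b s) (ht : MemI a b t) (hsx : s < x) (hxt : x < t) :
    ∃ h₀, 0 < h₀ ∧ h₀ ≤ x - s ∧ h₀ ≤ t - x ∧
      ∀ h, 0 < h → h < h₀ →
        0 < A * (leftLim f (x + h) - rightLim f (x - h)) := by
  have hAA : (0:ℝ) < A * A := mul_self_pos.2 hA
  have htq : Tendsto (fun h : ℝ =>
      A * ((leftLim f (x + h) - rightLim f (x - h)) /
        (leftLim α (x + h) - rightLim α (x - h)))) (𝓝[>] (0:ℝ)) (𝓝 (A * A)) :=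
    hD.const_mul A
  have hev : ∀ᶠ h in 𝓝[>] (0:ℝ),
      0 < A * ((leftLim f (x + h) - rightLim f (x - h)) /
        (leftLim α (x + h) - rightLim α (x - h))) :=
    htq.eventually (eventually_gt_nhds hAA)
  have hmpos : 0 < min (x - s) (t - x) := lt_min (by linarith) (by linarith)
  have hevm : Ioo (0:ℝ) (min (x - s) (t - x)) ∈ 𝓝[>] (0:ℝ) :=
    Ioo_mem_nhdsGT_of_mem ⟨le_refl _, hmpos⟩
  have hcomb := hev.and (eventually_of_mem hevm (fun h hh => hh))
  rw [eventually_iff, mem_nhdsGT_iff_exists_Ioo_subset] at hcomb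
  obtain ⟨u, hu, hsub⟩ := hcomb
  have hu0 : (0:ℝ) < u := hu
  refine ⟨min u (min (x - s) (t - x)), lt_min hu0 hmpos,
    le_trans (min_le_right _ _) (min_le_left _ _),
    le_trans (min_le_right _ _) (min_le_right _ _), ?_⟩
  intro h hp hl
  have hmem := hsub ⟨hp, lt_of_lt_of_le hl (min_le_left _ _)⟩
  obtain ⟨hq, hIoo⟩ := hmem
  have hxh1 : MemI a b (x - h) := by
    refine memI_of_between hs ht ?_ ?_
    · have := hIoo.2; have := le_trans (min_le_left (x-s) (t-x)) (le_refl _); linarith [lt_of_lt_of_le hIoo.2 (min_le_left (x-s) (t-x))]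
    · linarith
  have hxh2 : MemI a b (x + h) := by
    refine memI_of_between hs ht ?_ ?_
    · linarith
    · linarith [lt_of_lt_of_le hIoo.2 (min_le_right (x-s) (t-x))]
  have hΔ : 0 < leftLim α (x + h) - rightLim α (x - h) := by
    have := denom_pos hα hxh1 hxh2 (by linarith)
    linarith
  -- numerator = quotient * denominator
  have hΔne : leftLim α (x + h) - rightLim α (x - h) ≠ 0 := ne_of_gt hΔ
  have hnum : leftLim f (x + h) - rightLim f (x - h) =
      ((leftLim f (x + h) - rightLim f (x - h)) /
        (leftLim α (x + h) - rightLim α (x - h))) *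
        (leftLim α (x + h) - rightLim α (x - h)) := by
    field_simp
  have : 0 < A * (((leftLim f (x + h) - rightLim f (x - h)) /
      (leftLim α (x + h) - rightLim α (x - h))) *
      (leftLim α (x + h) - rightLim α (x - h))) := by
    rw [← mul_assoc]
    exact mul_pos hq hΔ
  rw [← hnum] at this
  exact this

/-- Derivation of the pointwise comparison `Q ≤ P` from the symmetric condition. -/
lemma a1_lemma (s t : ℝ) (P Q : ℝ → ℝ)
    (A2 : ∀ x ∈ Ioo s t, ∃ h₀, 0 < h₀ ∧ h₀ ≤ x - s ∧ h₀ ≤ t - x ∧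
      ∀ h, 0 < h → h < h₀ → P (x - h) < Q (x + h))
    (A3 : ∀ x ∈ Ioo s t, Tendsto Q (𝓝[>] x) (𝓝 (P x)))
    (A4 : ∀ x ∈ Ioo s t, Tendsto P (𝓝[<] x) (𝓝 (Q x))) :
    ∀ z ∈ Ioo s t, Q z ≤ P z := by
  intro z hz
  obtain ⟨h₀, h₀pos, h₀s, h₀t, hA2⟩ := A2 z hz
  have l1 : Tendsto (fun h : ℝ => P (z - h)) (𝓝[>] (0:ℝ)) (𝓝 (Q z)) :=
    (A4 z hz).comp (aux_tendsto_sub z)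
  have l2 : Tendsto (fun h : ℝ => Q (z + h)) (𝓝[>] (0:ℝ)) (𝓝 (P z)) :=
    (A3 z hz).comp (aux_tendsto_add z)
  refine le_of_tendsto_of_tendsto l1 l2 ?_
  filter_upwards [Ioo_mem_nhdsGT_of_mem (⟨le_refl (0:ℝ), h₀pos⟩ : (0:ℝ) ∈ Ico 0 h₀)]
    with h hh
  exact (hA2 h hh.1 hh.2).le

/-- Rolle's theorem for regulated functions. -/
theorem stmt11 (a b : EReal) (hab : a < b) (f α : ℝ → ℝ) (D : ℝ → ℝ)
    (hf : RegulatedOn' f a b) (hα : StrictMonoOn α {x : ℝ | MemI a b x})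
    (hD : ∀ x : ℝ, MemI a b x → HasDerivAlpha f α x (D x))
    (s t : ℝ) (hs : MemI a b s) (ht : MemI a b t) (hst : s < t)
    (heq : rightLim f s = leftLim f t) :
    ∃ u ∈ Ioo s t, ∃ v ∈ Ioo s t, D u * D v ≤ 0 := by
  by_contra hcon
  push_neg at hcon
  have hcon' : ∀ u ∈ Ioo s t, ∀ v ∈ Ioo s t, 0 < D u * D v := hcon
  set u₀ := (s + t) / 2 with hu₀def
  have hu₀ : u₀ ∈ Ioo s t := ⟨by simp only [hu₀def]; linarith, by simp only [hu₀def]; linarith⟩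
  have hDu₀sq := hcon' u₀ hu₀ u₀ hu₀
  have hne : D u₀ ≠ 0 := by
    intro h
    rw [h] at hDu₀sq
    simp at hDu₀sq
  have hmem : ∀ z ∈ Ioo s t, MemI a b z := fun z hz =>
    memI_of_between hs ht hz.1.le hz.2.le
  rcases hne.lt_or_gt with hneg | hpos
  · -- all derivatives negative
    have hDneg : ∀ x ∈ Ioo s t, D x < 0 := by
      intro x hx
      nlinarith [hcon' x hx u₀ hu₀]
    set P : ℝ → ℝ := fun z => -(rightLim f z) with hP
    set Q : ℝ → ℝ := fun z => -(leftLim f z) with hQ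
    have A2 : ∀ x ∈ Ioo s t, ∃ h₀, 0 < h₀ ∧ h₀ ≤ x - s ∧ h₀ ≤ t - x ∧
        ∀ h, 0 < h → h < h₀ → P (x - h) < Q (x + h) := by
      intro x hx
      obtain ⟨h₀, c1, c2, c3, c4⟩ := step_lemma hα (hD x (hmem x hx))
        (ne_of_lt (hDneg x hx)) hs ht hx.1 hx.2
      refine ⟨h₀, c1, c2, c3, ?_⟩
      intro h hp hl
      have := c4 h hp hl
      simp only [hP, hQ, neg_lt_neg_iff]
      nlinarith [hDneg x hx]
    have A3 : ∀ x ∈ Ico s t, Tendsto Q (𝓝[>] x) (𝓝 (P x)) := by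
      intro x hx
      have : MemI a b x := memI_of_between hs ht hx.1 hx.2.le
      exact (reg_right hf this).neg
    have A4 : ∀ x ∈ Ioc s t, Tendsto P (𝓝[<] x) (𝓝 (Q x)) := by
      intro x hx
      have : MemI a b x := memI_of_between hs ht hx.1.le hx.2
      exact (reg_left hf this).neg
    have A1 := a1_lemma s t P Q A2 (fun x hx => A3 x ⟨hx.1.le, hx.2⟩)
      (fun x hx => A4 x ⟨hx.1, hx.2.le⟩)
    have := myMain s t hst P Q A1 A2 A3 A4
    simp only [hP, hQ, neg_lt_neg_iff] at this
    rw [heq] at this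
    exact lt_irrefl _ this
  · -- all derivatives positive
    have hDpos : ∀ x ∈ Ioo s t, 0 < D x := by
      intro x hx
      nlinarith [hcon' x hx u₀ hu₀]
    set P : ℝ → ℝ := fun z => rightLim f z with hP
    set Q : ℝ → ℝ := fun z => leftLim f z with hQ
    have A2 : ∀ x ∈ Ioo s t, ∃ h₀, 0 < h₀ ∧ h₀ ≤ x - s ∧ h₀ ≤ t - x ∧
        ∀ h, 0 < h → h < h₀ → P (x - h) < Q (x + h) := by
      intro x hx
      obtain ⟨h₀, c1, c2, c3, c4⟩ := step_lemma hα (hD x (hmem x hx))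
        (ne_of_gt (hDpos x hx)) hs ht hx.1 hx.2
      refine ⟨h₀, c1, c2, c3, ?_⟩
      intro h hp hl
      have := c4 h hp hl
      simp only [hP, hQ]
      nlinarith [hDpos x hx]
    have A3 : ∀ x ∈ Ico s t, Tendsto Q (𝓝[>] x) (𝓝 (P x)) := by
      intro x hx
      exact reg_right hf (memI_of_between hs ht hx.1 hx.2.le)
    have A4 : ∀ x ∈ Ioc s t, Tendsto P (𝓝[<] x) (𝓝 (Q x)) := by
      intro x hx
      exact reg_left hf (memI_of_between hs ht hx.1.le hx.2)
    have A1 := a1_lemma s t P Q A2 (fun x hx => A3 x ⟨hx.1.le, hx.2⟩)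
      (fun x hx => A4 x ⟨hx.1, hx.2.le⟩)
    have := myMain s t hst P Q A1 A2 A3 A4
    simp only [hP, hQ] at this
    rw [heq] at this
    exact lt_irrefl _ this
end

section
/- Cauchy mean value theorem for regulated functions: Let f, g be regulated on (a,b), α strictly increasing, with (D_α f)(x) and (D_α g)(x) existing for all x ∈ (a,b). Then for any a < s < t < b there exist u, v ∈ (s,t) such that [(g^-(t)-g^+(s))(D_α f)(u) - (f^-(t)-f^+(s))(D_α g)(u)] · [(g^-(t)-g^+(s))(D_α f)(v) - (f^-(t)-f^+(s))(D_α g)(v)] ≤ 0. -/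
open Filter Topology Function Set MeasureTheory

lemma dist_lim_le {h : ℝ → ℝ} {l : Filter ℝ} [l.NeBot] {M L ε : ℝ}
    (hM : Tendsto h l (𝓝 M)) (hb : ∀ᶠ w in l, dist (h w) L ≤ ε) : dist M L ≤ ε := by
  have : M ∈ Metric.closedBall L ε :=
    (Metric.isClosed_closedBall).mem_of_tendsto hM (hb.mono fun w hw => hw)
  simpa [Metric.mem_closedBall] using this

/-- leftLim tends to the right limit, approaching from the right. -/
lemma tendsto_leftLim_from_right {h : ℝ → ℝ} {x L c : ℝ} (hxc : x < c)
    (hR : Tendsto h (𝓝[>] x) (𝓝 L))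
    (hex : ∀ y, x < y → y < c → ∃ M, Tendsto h (𝓝[<] y) (𝓝 M)) :
    Tendsto (fun y => leftLim h y) (𝓝[>] x) (𝓝 L) := by
  rw [Metric.tendsto_nhds]
  intro ε hε
  have h2 := Metric.tendsto_nhds.mp hR (ε/2) (by linarith)
  obtain ⟨u, hu, hsub⟩ := mem_nhdsGT_iff_exists_Ioo_subset.mp h2
  filter_upwards [Ioo_mem_nhdsGT_of_mem (Set.mem_Ico.mpr ⟨le_refl x, lt_min hu hxc⟩)] with y hy
  obtain ⟨M, hM⟩ := hex y hy.1 (hy.2.trans_le (min_le_right _ _))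
  rw [leftLim_eq_of_tendsto hM]
  have hd : dist M L ≤ ε/2 := by
    apply dist_lim_le hM
    filter_upwards [Ioo_mem_nhdsLT_of_mem (Set.mem_Ioc.mpr ⟨hy.1, le_refl y⟩)] with w hw
    exact le_of_lt (hsub ⟨hw.1, hw.2.trans (hy.2.trans_le (min_le_left _ _))⟩)
  calc dist M L ≤ ε/2 := hd
  _ < ε := by linarith

/-- rightLim tends to the left limit, approaching from the left. -/
lemma tendsto_rightLim_from_left {h : ℝ → ℝ} {x L c : ℝ} (hcx : c < x)
    (hL : Tendsto h (𝓝[<] x) (𝓝 L))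
    (hex : ∀ y, c < y → y < x → ∃ M, Tendsto h (𝓝[>] y) (𝓝 M)) :
    Tendsto (fun y => rightLim h y) (𝓝[<] x) (𝓝 L) := by
  rw [Metric.tendsto_nhds]
  intro ε hε
  have h2 := Metric.tendsto_nhds.mp hL (ε/2) (by linarith)
  obtain ⟨u, hu, hsub⟩ := mem_nhdsLT_iff_exists_Ioo_subset.mp h2
  filter_upwards [Ioo_mem_nhdsLT_of_mem (Set.mem_Ioc.mpr ⟨max_lt hu hcx, le_refl x⟩)] with y hy
  obtain ⟨M, hM⟩ := hex y (lt_of_le_of_lt (le_max_right _ _) hy.1) hy.2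
  rw [rightLim_eq_of_tendsto hM]
  have hd : dist M L ≤ ε/2 := by
    apply dist_lim_le hM
    filter_upwards [Ioo_mem_nhdsGT_of_mem (Set.mem_Ico.mpr ⟨le_refl y, hy.2⟩)] with w hw
    exact le_of_lt (hsub ⟨lt_of_le_of_lt (le_max_left _ _) (hy.1.trans hw.1), hw.2⟩)
  calc dist M L ≤ ε/2 := hd
  _ < ε := by linarith

/-- leftLim tends to the left limit, approaching from the left. -/
lemma tendsto_leftLim_from_left {h : ℝ → ℝ} {x L c : ℝ} (hcx : c < x)
    (hL : Tendsto h (𝓝[<] x) (𝓝 L))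
    (hex : ∀ y, c < y → y < x → ∃ M, Tendsto h (𝓝[<] y) (𝓝 M)) :
    Tendsto (fun y => leftLim h y) (𝓝[<] x) (𝓝 L) := by
  rw [Metric.tendsto_nhds]
  intro ε hε
  have h2 := Metric.tendsto_nhds.mp hL (ε/2) (by linarith)
  obtain ⟨u, hu, hsub⟩ := mem_nhdsLT_iff_exists_Ioo_subset.mp h2
  filter_upwards [Ioo_mem_nhdsLT_of_mem (Set.mem_Ioc.mpr ⟨max_lt hu hcx, le_refl x⟩)] with y hy
  obtain ⟨M, hM⟩ := hex y (lt_of_le_of_lt (le_max_right _ _) hy.1) hy.2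
  rw [leftLim_eq_of_tendsto hM]
  have hd : dist M L ≤ ε/2 := by
    apply dist_lim_le hM
    filter_upwards [Ioo_mem_nhdsLT_of_mem (Set.mem_Ioc.mpr ⟨hy.1, le_refl y⟩)] with w hw
    exact le_of_lt (hsub ⟨lt_of_le_of_lt (le_max_left _ _) hw.1, hw.2.trans hy.2⟩)
  calc dist M L ≤ ε/2 := hd
  _ < ε := by linarith

lemma memI_between_s12 {a b : EReal} {p q y : ℝ} (hp : MemI a b p) (hq : MemI a b q)
    (h1 : p ≤ y) (h2 : y ≤ q) : MemI a b y :=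
  ⟨lt_of_lt_of_le hp.1 (EReal.coe_le_coe_iff.mpr h1),
   lt_of_le_of_lt (EReal.coe_le_coe_iff.mpr h2) hq.2⟩

section alpha
variable {a b : EReal} {α : ℝ → ℝ} (hα : StrictMonoOn α {x | MemI a b x})
  {p q : ℝ} (hp : MemI a b p) (hq : MemI a b q) (hpq : p < q)

include hα hp hq hpq

lemma alpha_mono : MonotoneOn α (Ioo p q) := by
  intro u hu v hv huv
  rcases eq_or_lt_of_le huv with rfl | hlt
  · exact le_refl _
  · exact le_of_lt (hα (memI_between_s12 hp hq hu.1.le hu.2.le)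
      (memI_between_s12 hp hq hv.1.le hv.2.le) hlt)

lemma alpha_bddBelow : BddBelow (α '' Ioo p q) := by
  refine ⟨α p, ?_⟩
  rintro _ ⟨w, hw, rfl⟩
  exact le_of_lt (hα hp (memI_between_s12 hp hq hw.1.le hw.2.le) hw.1)

lemma alpha_bddAbove : BddAbove (α '' Ioo p q) := by
  refine ⟨α q, ?_⟩
  rintro _ ⟨w, hw, rfl⟩
  exact le_of_lt (hα (memI_between_s12 hp hq hw.1.le hw.2.le) hq hw.2)

lemma alpha_rightLim_exists : Tendsto α (𝓝[>] p) (𝓝 (sInf (α '' Ioo p q))) :=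
  MonotoneOn.tendsto_nhdsWithin_Ioo_right ⟨(p+q)/2, by constructor <;> linarith⟩
    (alpha_mono hα hp hq hpq) (alpha_bddBelow hα hp hq hpq)

lemma alpha_leftLim_exists : Tendsto α (𝓝[<] q) (𝓝 (sSup (α '' Ioo p q))) :=
  MonotoneOn.tendsto_nhdsWithin_Ioo_left ⟨(p+q)/2, by constructor <;> linarith⟩
    (alpha_mono hα hp hq hpq) (alpha_bddAbove hα hp hq hpq)

lemma alpha_gap : rightLim α p < leftLim α q := by
  have hm1 : (p + (q - p)/3) ∈ Ioo p q := by constructor <;> linarith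
  have hm2 : (p + 2*(q - p)/3) ∈ Ioo p q := by constructor <;> linarith
  rw [rightLim_eq_of_tendsto (alpha_rightLim_exists hα hp hq hpq),
      leftLim_eq_of_tendsto (alpha_leftLim_exists hα hp hq hpq)]
  have h1 : sInf (α '' Ioo p q) ≤ α (p + (q - p)/3) :=
    csInf_le (alpha_bddBelow hα hp hq hpq) (mem_image_of_mem _ hm1)
  have h2 : α (p + 2*(q - p)/3) ≤ sSup (α '' Ioo p q) :=
    le_csSup (alpha_bddAbove hα hp hq hpq) (mem_image_of_mem _ hm2)
  have h12 : α (p + (q - p)/3) < α (p + 2*(q - p)/3) :=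
    hα (memI_between_s12 hp hq hm1.1.le hm1.2.le) (memI_between_s12 hp hq hm2.1.le hm2.2.le)
      (by linarith)
  linarith

end alpha

/-- Local strict increase from positive α-derivative. -/
lemma local_incr {a b : EReal} {h α : ℝ → ℝ} (hα : StrictMonoOn α {x | MemI a b x})
    {s t x D : ℝ} (hs : MemI a b s) (ht : MemI a b t)
    (hx : x ∈ Ioo s t) (hD : HasDerivAlpha h α x D) (hDpos : 0 < D) :
    ∃ δ > 0, ∀ η ∈ Ioo (0:ℝ) δ, rightLim h (x - η) < leftLim h (x + η) := by
  have h1 : ∀ᶠ η in 𝓝[>] (0:ℝ), 0 <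
      (leftLim h (x + η) - rightLim h (x - η)) / (leftLim α (x + η) - rightLim α (x - η)) :=
    hD.eventually (eventually_gt_nhds hDpos)
  have h2 : Ioo (0:ℝ) (min (x - s) (t - x)) ∈ 𝓝[>] (0:ℝ) :=
    Ioo_mem_nhdsGT_of_mem ⟨le_refl _, lt_min (by linarith [hx.1]) (by linarith [hx.2])⟩
  obtain ⟨u, hu, hsub⟩ := mem_nhdsGT_iff_exists_Ioo_subset.mp (h1.and h2)
  refine ⟨min u (min (x - s) (t - x)), lt_min hu (lt_min (by linarith [hx.1]) (by linarith [hx.2])),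
    fun η hη => ?_⟩
  have hη' : η ∈ Ioo 0 u := ⟨hη.1, lt_of_lt_of_le hη.2 (min_le_left _ _)⟩
  obtain ⟨hq, -⟩ := hsub hη'
  have hηs : η < x - s := lt_of_lt_of_le hη.2 (le_trans (min_le_right _ _) (min_le_left _ _))
  have hηt : η < t - x := lt_of_lt_of_le hη.2 (le_trans (min_le_right _ _) (min_le_right _ _))
  have hm1 : MemI a b (x - η) := memI_between_s12 hs ht (by linarith) (by linarith [hη.1, hx.2.le])
  have hm2 : MemI a b (x + η) := memI_between_s12 hs ht (by linarith [hη.1, hx.1.le]) (by linarith)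
  have hgap : rightLim α (x - η) < leftLim α (x + η) :=
    alpha_gap hα hm1 hm2 (by linarith [hη.1])
  have hΔ : (0:ℝ) < leftLim α (x + η) - rightLim α (x - η) := by linarith
  have := mul_pos hq hΔ
  rw [div_mul_cancel₀ _ (ne_of_gt hΔ)] at this
  linarith

/-- Main monotonicity lemma: local strict increase implies global increase of one-sided limits. -/
theorem incr_of_local {h : ℝ → ℝ} {s t : ℝ} (hst : s < t)
    (hreg : ∀ x ∈ Icc s t, (∃ L, Tendsto h (𝓝[<] x) (𝓝 L)) ∧ ∃ R, Tendsto h (𝓝[>] x) (𝓝 R))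
    (hloc : ∀ x ∈ Ioo s t, ∃ δ > 0, ∀ η ∈ Ioo (0:ℝ) δ, rightLim h (x - η) < leftLim h (x + η)) :
    rightLim h s < leftLim h t := by
  -- one-sided limits as actual limits
  have hlim : ∀ x ∈ Icc s t, Tendsto h (𝓝[<] x) (𝓝 (leftLim h x)) := by
    intro x hx
    obtain ⟨⟨L, hL⟩, -⟩ := hreg x hx
    rwa [leftLim_eq_of_tendsto hL]
  have hrim : ∀ x ∈ Icc s t, Tendsto h (𝓝[>] x) (𝓝 (rightLim h x)) := by
    intro x hx
    obtain ⟨-, R, hR⟩ := hreg x hx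
    rwa [rightLim_eq_of_tendsto hR]
  -- step A : leftLim ≤ rightLim on (s,t)
  have stepA : ∀ x ∈ Ioo s t, leftLim h x ≤ rightLim h x := by
    intro x hx
    have hxI : x ∈ Icc s t := ⟨hx.1.le, hx.2.le⟩
    have t1 : Tendsto (fun η : ℝ => rightLim h (x - η)) (𝓝[>] 0) (𝓝 (leftLim h x)) := by
      have base : Tendsto (fun y => rightLim h y) (𝓝[<] x) (𝓝 (leftLim h x)) :=
        tendsto_rightLim_from_left hx.1 (hlim x hxI)
          (fun y hy1 hy2 => (hreg y ⟨hy1.le, hy2.le.trans hx.2.le⟩).2)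
      refine base.comp ?_
      rw [tendsto_nhdsWithin_iff]
      constructor
      · have : Tendsto (fun η : ℝ => x - η) (𝓝 0) (𝓝 (x - 0)) :=
          tendsto_const_nhds.sub tendsto_id
        simpa using this.mono_left nhdsWithin_le_nhds
      · filter_upwards [self_mem_nhdsWithin] with η (hη : 0 < η)
        simpa using by linarith
    have t2 : Tendsto (fun η : ℝ => leftLim h (x + η)) (𝓝[>] 0) (𝓝 (rightLim h x)) := by
      have base : Tendsto (fun y => leftLim h y) (𝓝[>] x) (𝓝 (rightLim h x)) :=
        tendsto_leftLim_from_right hx.2 (hrim x hxI)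
          (fun y hy1 hy2 => (hreg y ⟨hx.1.le.trans hy1.le, hy2.le⟩).1)
      refine base.comp ?_
      rw [tendsto_nhdsWithin_iff]
      constructor
      · have : Tendsto (fun η : ℝ => x + η) (𝓝 0) (𝓝 (x + 0)) :=
          tendsto_const_nhds.add tendsto_id
        simpa using this.mono_left nhdsWithin_le_nhds
      · filter_upwards [self_mem_nhdsWithin] with η (hη : 0 < η)
        simpa using by linarith
    obtain ⟨δ, hδ, hd⟩ := hloc x hx
    refine le_of_tendsto_of_tendsto t1 t2 ?_
    filter_upwards [Ioo_mem_nhdsGT_of_mem (Set.mem_Ico.mpr ⟨le_refl (0:ℝ), hδ⟩)] with η hη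
    exact (hd η hη).le
  -- step M : global non-strict monotonicity of one-sided limits
  have stepM : ∀ p, s ≤ p → p < t → ∀ q, p < q → q ≤ t → rightLim h p ≤ leftLim h q := by
    intro p hsp hpt q hpq hqt
    have hpI : p ∈ Icc s t := ⟨hsp, hpt.le⟩
    refine le_of_forall_pos_le_add ?_
    intro ε hε
    rw [← sub_le_iff_le_add]
    -- the set T
    set T : Set ℝ := {y | y ∈ Icc p t ∧ ∀ z, p < z → z ≤ y → rightLim h p - ε ≤ leftLim h z}
      with hT
    have hpT : p ∈ T := ⟨⟨le_refl p, hpt.le⟩, fun z hz1 hz2 => absurd (hz1.trans_le hz2) (lt_irrefl p)⟩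
    have hbdd : BddAbove T := ⟨t, fun y hy => hy.1.2⟩
    set c := sSup T with hc
    have hpc : p ≤ c := le_csSup hbdd hpT
    have hct : c ≤ t := csSup_le ⟨p, hpT⟩ (fun y hy => hy.1.2)
    -- c > p
    have hLz : Tendsto (fun y => leftLim h y) (𝓝[>] p) (𝓝 (rightLim h p)) :=
      tendsto_leftLim_from_right hpt (hrim p hpI)
        (fun y hy1 hy2 => (hreg y ⟨hsp.trans hy1.le, hy2.le⟩).1)
    have hev : ∀ᶠ y in 𝓝[>] p, rightLim h p - ε < leftLim h y :=
      hLz.eventually (eventually_gt_nhds (by linarith))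
    obtain ⟨u, hu, hsub⟩ := mem_nhdsGT_iff_exists_Ioo_subset.mp hev
    have hy₁T : min ((p + u)/2) t ∈ T := by
      refine ⟨⟨le_min (by rw [Set.mem_Ioi] at hu; linarith) hpt.le, min_le_right _ _⟩,
        fun z hz1 hz2 => ?_⟩
      have hzu : z < u := by
        rw [Set.mem_Ioi] at hu
        have := hz2.trans (min_le_left _ _)
        linarith
      exact (hsub ⟨hz1, hzu⟩).le
    have hpc' : p < c := by
      rw [Set.mem_Ioi] at hu
      calc p < min ((p + u)/2) t := lt_min (by linarith) hpt
      _ ≤ c := le_csSup hbdd hy₁T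
    -- all z in (p, c] satisfy the bound
    have hbound : ∀ z, p < z → z ≤ c → rightLim h p - ε ≤ leftLim h z := by
      have hlt : ∀ z, p < z → z < c → rightLim h p - ε ≤ leftLim h z := by
        intro z hz1 hz2
        obtain ⟨y, hyT, hzy⟩ := exists_lt_of_lt_csSup ⟨p, hpT⟩ hz2
        exact hyT.2 z hz1 hzy.le
      intro z hz1 hz2
      rcases lt_or_eq_of_le hz2 with hlt' | heq
      · exact hlt z hz1 hlt'
      · -- z = c : use left-continuity of leftLim
        subst heq
        have hcI : c ∈ Icc s t := ⟨hsp.trans hz1.le, hct⟩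
        have hLc : Tendsto (fun y => leftLim h y) (𝓝[<] c) (𝓝 (leftLim h c)) :=
          tendsto_leftLim_from_left hz1 (hlim c hcI)
            (fun y hy1 hy2 => (hreg y ⟨hsp.trans hy1.le, hy2.le.trans hct⟩).1)
        refine ge_of_tendsto hLc ?_
        filter_upwards [Ioo_mem_nhdsLT_of_mem (Set.mem_Ioc.mpr ⟨hz1, le_refl c⟩)] with w hw
        exact hlt w hw.1 hw.2
    -- c = t
    have hceq : c = t := by
      by_contra hne
      have hclt : c < t := lt_of_le_of_ne hct hne
      have hcmem : c ∈ Ioo s t := ⟨lt_of_le_of_lt hsp hpc', hclt⟩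
      obtain ⟨δ, hδ, hd⟩ := hloc c hcmem
      set δ' := min δ (min (c - p) (t - c)) with hδ'
      have hδ'pos : 0 < δ' := lt_min hδ (lt_min (by linarith) (by linarith))
      have hy₂T : c + δ'/2 ∈ T := by
        refine ⟨⟨by linarith, ?_⟩, fun z hz1 hz2 => ?_⟩
        · have : δ' ≤ t - c := le_trans (min_le_right _ _) (min_le_right _ _)
          linarith
        rcases le_or_gt z c with hzc | hzc
        · exact hbound z hz1 hzc
        · -- z ∈ (c, c + δ'/2]
          set η := z - c with hη
          have hηδ : η < δ := by
            have h1 : δ' ≤ δ := min_le_left _ _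
            have : η ≤ δ'/2 := by simp only [hη]; linarith
            linarith
          have hηpos : 0 < η := by simp only [hη]; linarith
          have hcp : δ' ≤ c - p := le_trans (min_le_right _ _) (min_le_left _ _)
          have h1 : rightLim h (c - η) < leftLim h (c + η) := hd η ⟨hηpos, hηδ⟩
          have h2 : leftLim h (c - η) ≤ rightLim h (c - η) := by
            apply stepA
            constructor
            · have : η ≤ δ'/2 := by simp only [hη]; linarith
              have : p < c - η := by linarith
              linarith [hsp]
            · linarith
          have h3 : rightLim h p - ε ≤ leftLim h (c - η) := by
            apply hbound
            · have : η ≤ δ'/2 := by simp only [hη]; linarith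
              linarith
            · linarith
          have hz : c + η = z := by simp only [hη]; ring
          rw [← hz]
          linarith
      have : c + δ'/2 ≤ c := le_csSup hbdd hy₂T
      linarith
    exact hbound q hpq (hceq ▸ hqt)
  -- final chaining
  set x₀ := (s + t)/2 with hx₀
  have hx₀mem : x₀ ∈ Ioo s t := ⟨by simp only [hx₀]; linarith, by simp only [hx₀]; linarith⟩
  obtain ⟨δ, hδ, hd⟩ := hloc x₀ hx₀mem
  set η := min (δ/2) ((t - s)/4) with hη
  have hηpos : 0 < η := lt_min (by linarith) (by linarith)
  have hηδ : η < δ := lt_of_le_of_lt (min_le_left _ _) (by linarith)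
  have hηq : η ≤ (t - s)/4 := min_le_right _ _
  have hm1 : x₀ - η ∈ Ioo s t := ⟨by simp only [hx₀]; linarith, by simp only [hx₀]; linarith⟩
  have hm2 : x₀ + η ∈ Ioo s t := ⟨by simp only [hx₀]; linarith, by simp only [hx₀]; linarith⟩
  have c1 : rightLim h s ≤ leftLim h (x₀ - η) := stepM s (le_refl s) hst _ hm1.1 hm1.2.le
  have c2 : leftLim h (x₀ - η) ≤ rightLim h (x₀ - η) := stepA _ hm1
  have c3 : rightLim h (x₀ - η) < leftLim h (x₀ + η) := hd η ⟨hηpos, hηδ⟩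
  have c4 : leftLim h (x₀ + η) ≤ rightLim h (x₀ + η) := stepA _ hm2
  have c5 : rightLim h (x₀ + η) ≤ leftLim h t := stepM _ hm2.1.le hm2.2 t hm2.2 (le_refl t)
  linarith

section comb
variable {a b : EReal} {f g α Df Dg : ℝ → ℝ} {A B : ℝ}

lemma comb_left (hf : RegulatedOn' f a b) (hg : RegulatedOn' g a b) {x : ℝ} (hx : MemI a b x)
    (A B : ℝ) :
    Tendsto (fun y => A * f y - B * g y) (𝓝[<] x) (𝓝 (A * leftLim f x - B * leftLim g x)) ∧
      leftLim (fun y => A * f y - B * g y) x = A * leftLim f x - B * leftLim g x := by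
  obtain ⟨⟨Lf, hLf⟩, -⟩ := hf x hx
  obtain ⟨⟨Lg, hLg⟩, -⟩ := hg x hx
  have ef : leftLim f x = Lf := leftLim_eq_of_tendsto hLf
  have eg : leftLim g x = Lg := leftLim_eq_of_tendsto hLg
  have hT : Tendsto (fun y => A * f y - B * g y) (𝓝[<] x) (𝓝 (A * Lf - B * Lg)) :=
    (hLf.const_mul A).sub (hLg.const_mul B)
  rw [ef, eg]
  exact ⟨hT, leftLim_eq_of_tendsto hT⟩

lemma comb_right (hf : RegulatedOn' f a b) (hg : RegulatedOn' g a b) {x : ℝ} (hx : MemI a b x)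
    (A B : ℝ) :
    Tendsto (fun y => A * f y - B * g y) (𝓝[>] x) (𝓝 (A * rightLim f x - B * rightLim g x)) ∧
      rightLim (fun y => A * f y - B * g y) x = A * rightLim f x - B * rightLim g x := by
  obtain ⟨-, Rf, hRf⟩ := hf x hx
  obtain ⟨-, Rg, hRg⟩ := hg x hx
  have ef : rightLim f x = Rf := rightLim_eq_of_tendsto hRf
  have eg : rightLim g x = Rg := rightLim_eq_of_tendsto hRg
  have hT : Tendsto (fun y => A * f y - B * g y) (𝓝[>] x) (𝓝 (A * Rf - B * Rg)) :=
    (hRf.const_mul A).sub (hRg.const_mul B)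
  rw [ef, eg]
  exact ⟨hT, rightLim_eq_of_tendsto hT⟩

lemma comb_deriv (hf : RegulatedOn' f a b) (hg : RegulatedOn' g a b)
    (hDf : ∀ x, MemI a b x → HasDerivAlpha f α x (Df x))
    (hDg : ∀ x, MemI a b x → HasDerivAlpha g α x (Dg x))
    {s t x : ℝ} (hs : MemI a b s) (ht : MemI a b t) (hx : x ∈ Ioo s t) (A B : ℝ) :
    HasDerivAlpha (fun y => A * f y - B * g y) α x (A * Df x - B * Dg x) := by
  have hxI : MemI a b x := memI_between_s12 hs ht hx.1.le hx.2.le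
  have hT : Tendsto (fun η : ℝ =>
      A * ((leftLim f (x + η) - rightLim f (x - η)) / (leftLim α (x + η) - rightLim α (x - η)))
      - B * ((leftLim g (x + η) - rightLim g (x - η)) / (leftLim α (x + η) - rightLim α (x - η))))
      (𝓝[>] (0:ℝ)) (𝓝 (A * Df x - B * Dg x)) :=
    ((hDf x hxI).const_mul A).sub ((hDg x hxI).const_mul B)
  refine Tendsto.congr' ?_ hT
  have hmem : Ioo (0:ℝ) (min (x - s) (t - x)) ∈ 𝓝[>] (0:ℝ) :=
    Ioo_mem_nhdsGT_of_mem (Set.mem_Ico.mpr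
      ⟨le_refl (0:ℝ), lt_min (by linarith [hx.1]) (by linarith [hx.2])⟩)
  filter_upwards [hmem] with η hη
  have hη1 : η < x - s := lt_of_lt_of_le hη.2 (min_le_left _ _)
  have hη2 : η < t - x := lt_of_lt_of_le hη.2 (min_le_right _ _)
  have hm1 : MemI a b (x - η) := memI_between_s12 hs ht (by linarith) (by linarith [hη.1, hx.2.le])
  have hm2 : MemI a b (x + η) := memI_between_s12 hs ht (by linarith [hη.1, hx.1.le]) (by linarith)
  rw [(comb_left hf hg hm2 A B).2, (comb_right hf hg hm1 A B).2]
  have : A * leftLim f (x + η) - B * leftLim g (x + η)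
      - (A * rightLim f (x - η) - B * rightLim g (x - η))
      = A * (leftLim f (x + η) - rightLim f (x - η))
        - B * (leftLim g (x + η) - rightLim g (x - η)) := by ring
  rw [this]
  rcases eq_or_ne (leftLim α (x + η) - rightLim α (x - η)) 0 with hd | hd
  · simp [hd]
  · field_simp

end comb


/-- Cauchy's mean value theorem for regulated functions. -/
theorem stmt12 (a b : EReal) (hab : a < b) (f g α : ℝ → ℝ) (Df Dg : ℝ → ℝ)
    (hf : RegulatedOn' f a b) (hg : RegulatedOn' g a b)
    (hα : StrictMonoOn α {x : ℝ | MemI a b x})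
    (hDf : ∀ x : ℝ, MemI a b x → HasDerivAlpha f α x (Df x))
    (hDg : ∀ x : ℝ, MemI a b x → HasDerivAlpha g α x (Dg x))
    (s t : ℝ) (hs : MemI a b s) (ht : MemI a b t) (hst : s < t) :
    ∃ u ∈ Ioo s t, ∃ v ∈ Ioo s t,
      ((leftLim g t - rightLim g s) * Df u - (leftLim f t - rightLim f s) * Dg u) *
        ((leftLim g t - rightLim g s) * Df v - (leftLim f t - rightLim f s) * Dg v) ≤ 0 := by
  by_contra hcon
  push_neg at hcon
  set A := leftLim g t - rightLim g s with hA
  set B := leftLim f t - rightLim f s with hB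
  have hregh : ∀ (A' B' : ℝ), ∀ x ∈ Icc s t,
      (∃ L, Tendsto (fun y => A' * f y - B' * g y) (𝓝[<] x) (𝓝 L)) ∧
        ∃ R, Tendsto (fun y => A' * f y - B' * g y) (𝓝[>] x) (𝓝 R) := by
    intro A' B' x hx
    have hxI : MemI a b x := memI_between_s12 hs ht hx.1 hx.2
    exact ⟨⟨_, (comb_left hf hg hxI A' B').1⟩, ⟨_, (comb_right hf hg hxI A' B').1⟩⟩
  have hkey : A * leftLim f t - B * leftLim g t = A * rightLim f s - B * rightLim g s := by
    rw [hA, hB]; ring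
  have hne : ∀ u ∈ Ioo s t, A * Df u - B * Dg u ≠ 0 := by
    intro u hu h0
    have h2 := hcon u hu u hu
    rw [h0] at h2
    simp at h2
  have hmid : ((s+t)/2) ∈ Ioo s t := ⟨by linarith, by linarith⟩
  rcases lt_or_gt_of_ne (hne _ hmid) with hneg | hpos
  · -- all derivatives negative
    have hall : ∀ u ∈ Ioo s t, A * Df u - B * Dg u < 0 := by
      intro u hu
      rcases lt_or_gt_of_ne (hne u hu) with h' | h'
      · exact h'
      · exfalso
        have h2 := hcon _ hmid u hu
        have := mul_neg_of_neg_of_pos hneg h'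
        linarith
    have hloc : ∀ x ∈ Ioo s t, ∃ δ > 0, ∀ η ∈ Ioo (0:ℝ) δ,
        rightLim (fun y => (-A) * f y - (-B) * g y) (x - η) <
          leftLim (fun y => (-A) * f y - (-B) * g y) (x + η) := by
      intro x hx
      exact local_incr hα hs ht hx (comb_deriv hf hg hDf hDg hs ht hx (-A) (-B))
        (by have := hall x hx; linarith)
    have hfin := incr_of_local hst (hregh (-A) (-B)) hloc
    rw [(comb_right hf hg hs (-A) (-B)).2, (comb_left hf hg ht (-A) (-B)).2] at hfin
    linarith
  · -- all derivatives positive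
    have hall : ∀ u ∈ Ioo s t, 0 < A * Df u - B * Dg u := by
      intro u hu
      rcases lt_or_gt_of_ne (hne u hu) with h' | h'
      · exfalso
        have h2 := hcon _ hmid u hu
        have := mul_neg_of_pos_of_neg hpos h'
        linarith
      · exact h'
    have hloc : ∀ x ∈ Ioo s t, ∃ δ > 0, ∀ η ∈ Ioo (0:ℝ) δ,
        rightLim (fun y => A * f y - B * g y) (x - η) <
          leftLim (fun y => A * f y - B * g y) (x + η) := by
      intro x hx
      exact local_incr hα hs ht hx (comb_deriv hf hg hDf hDg hs ht hx A B) (hall x hx)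
    have hfin := incr_of_local hst (hregh A B) hloc
    rw [(comb_right hf hg hs A B).2, (comb_left hf hg ht A B).2] at hfin
    linarith
end
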